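/- arXiv:1307.7885 — 11 statements merged into one kernel-verified Lean document; each statement's English description precedes it below -/
import Mathlib

section
/- Let a, b : [0,T] → ℝ be continuous, and let w, z : [0,T] → ℝ be differentiable with z(0) ≥ w(0), w'(t) = a(t)·w(t)² + b(t) and z'(t) ≥ a(t)·z(t)² + b(t) on [0,T]. Then z(t) ≥ w(t) for all t ∈ [0,T]. -/
open Set

/-- Maximum principle / comparison lemma for Riccati-type ODEs:
if `w' = a w² + b` and `z' ≥ a z² + b` on `[0,T]` with `z 0 ≥ w 0`,
then `z ≥ w` on `[0,T]`. -/
theorem riccati_comparison (T : ℝ) (hT : 0 < T) (a b w z w' z' : ℝ → ℝ)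
    (ha : ContinuousOn a (Icc 0 T)) (hb : ContinuousOn b (Icc 0 T))
    (hw : ∀ t ∈ Icc (0:ℝ) T, HasDerivAt w (w' t) t)
    (hz : ∀ t ∈ Icc (0:ℝ) T, HasDerivAt z (z' t) t)
    (hweq : ∀ t ∈ Icc (0:ℝ) T, w' t = a t * (w t) ^ 2 + b t)
    (hzge : ∀ t ∈ Icc (0:ℝ) T, z' t ≥ a t * (z t) ^ 2 + b t)
    (h0 : z 0 ≥ w 0) :
    ∀ t ∈ Icc (0:ℝ) T, z t ≥ w t := by
  -- projection onto [0, T]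
  set p : ℝ → ℝ := fun t => max 0 (min t T) with hp
  have hpcont : Continuous p := continuous_const.max (continuous_id.min continuous_const)
  have hpmem : ∀ t, p t ∈ Icc (0:ℝ) T := by
    intro t
    constructor
    · exact le_max_left _ _
    · exact max_le (le_of_lt hT) (min_le_right _ _)
  have hpid : ∀ t ∈ Icc (0:ℝ) T, p t = t := by
    intro t ht
    simp [hp, min_eq_left ht.2, max_eq_right ht.1]
  -- the coefficient c = a (z + w), extended continuously to ℝ
  have hzc : ContinuousOn z (Icc 0 T) := fun t ht => ((hz t ht).continuousAt).continuousWithinAt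
  have hwc : ContinuousOn w (Icc 0 T) := fun t ht => ((hw t ht).continuousAt).continuousWithinAt
  set c : ℝ → ℝ := fun t => a t * (z t + w t) with hc
  have hccont : ContinuousOn c (Icc 0 T) := ha.mul (hzc.add hwc)
  set ce : ℝ → ℝ := fun t => c (p t) with hce
  have hcecont : Continuous ce := hccont.comp_continuous hpcont hpmem
  have hceeq : ∀ t ∈ Icc (0:ℝ) T, ce t = c t := by
    intro t ht; simp [hce, hpid t ht]
  -- the integral C
  set C : ℝ → ℝ := fun t => ∫ s in (0:ℝ)..t, ce s with hC
  have hCd : ∀ t : ℝ, HasDerivAt C (ce t) t := by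
    intro t
    exact intervalIntegral.integral_hasDerivAt_right
      (hcecont.intervalIntegrable 0 t)
      (hcecont.stronglyMeasurableAtFilter _ _)
      hcecont.continuousAt
  -- the function g
  set g : ℝ → ℝ := fun t => (z t - w t) * Real.exp (-C t) with hg
  have hgd : ∀ t ∈ Icc (0:ℝ) T, HasDerivAt g
      ((z' t - w' t - ce t * (z t - w t)) * Real.exp (-C t)) t := by
    intro t ht
    have h1 : HasDerivAt (fun t => z t - w t) (z' t - w' t) t := (hz t ht).sub (hw t ht)
    have h2 : HasDerivAt (fun t => Real.exp (-C t)) (-(ce t) * Real.exp (-C t)) t := by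
      have := ((hCd t).neg).exp
      convert this using 1
      · rfl
      · simp only [Pi.neg_apply]; ring
    have := h1.mul h2
    exact this.congr_deriv (by ring)
  have hgderiv_nonneg : ∀ t ∈ Icc (0:ℝ) T,
      0 ≤ (z' t - w' t - ce t * (z t - w t)) * Real.exp (-C t) := by
    intro t ht
    have h1 := hzge t ht
    have h2 := hweq t ht
    have h3 := hceeq t ht
    have key : z' t - w' t - ce t * (z t - w t) ≥ 0 := by
      rw [h3]
      have : c t * (z t - w t) = a t * (z t) ^ 2 - a t * (w t) ^ 2 := by
        simp only [hc]; ring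
      nlinarith
    exact mul_nonneg key (Real.exp_pos _).le
  -- g is monotone on [0, T]
  have hgmono : MonotoneOn g (Icc 0 T) := by
    apply monotoneOn_of_deriv_nonneg (convex_Icc 0 T)
    · exact fun t ht => ((hgd t ht).continuousAt).continuousWithinAt
    · intro t ht
      rw [interior_Icc] at ht
      exact (hgd t (Ioo_subset_Icc_self ht)).differentiableAt.differentiableWithinAt
    · intro t ht
      rw [interior_Icc] at ht
      rw [(hgd t (Ioo_subset_Icc_self ht)).deriv]
      exact hgderiv_nonneg t (Ioo_subset_Icc_self ht)
  -- conclude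
  intro t ht
  have h0mem : (0:ℝ) ∈ Icc (0:ℝ) T := ⟨le_refl _, hT.le⟩
  have := hgmono h0mem ht ht.1
  have hC0 : C 0 = 0 := by simp [hC]
  have hg0 : g 0 = z 0 - w 0 := by simp [hg, hC0]
  have hgt : g t = (z t - w t) * Real.exp (-C t) := rfl
  rw [hg0, hgt] at this
  have hE : 0 < Real.exp (-C t) := Real.exp_pos _
  nlinarith
end

section
/- Let c : (0, ρ_max) → ℝ be a positive C¹ function such that ρ ↦ c(ρ)/ρ is integrable at 0, and suppose the function 𝒢(ρ) := (1/c(ρ)) · d/dρ (ρ c(ρ)) satisfies 1 < 𝒢(ρ) < 2 for all ρ. Define H(ρ) = ∫₀^ρ c(s)/s ds. Then H(ρ) ≥ c(ρ) for all ρ > 0. -/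
open Set MeasureTheory

/-- For a gas with sound speed `c > 0` of class `C¹` on `(0, ρmax)` such that the
fundamental derivative `𝒢(ρ) = (1/c)·d/dρ(ρ c) = (c + ρ c')/c` satisfies `1 < 𝒢 < 2`
and `ρ ↦ c(ρ)/ρ` is integrable at `0`, the Riemann invariant function
`H(ρ) = ∫₀^ρ c(s)/s ds` satisfies `H ≥ c`. -/
theorem H_ge_c (ρmax : ℝ) (hρmax : 0 < ρmax) (c c' H : ℝ → ℝ)
    (hcpos : ∀ ρ ∈ Ioo (0:ℝ) ρmax, 0 < c ρ)
    (hcderiv : ∀ ρ ∈ Ioo (0:ℝ) ρmax, HasDerivAt c (c' ρ) ρ)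
    (hint : ∀ ρ ∈ Ioo (0:ℝ) ρmax, IntegrableOn (fun s => c s / s) (Ioc 0 ρ))
    (hG : ∀ ρ ∈ Ioo (0:ℝ) ρmax,
      1 < (c ρ + ρ * c' ρ) / c ρ ∧ (c ρ + ρ * c' ρ) / c ρ < 2)
    (hH : ∀ ρ ∈ Ioo (0:ℝ) ρmax, H ρ = ∫ s in Ioc (0:ℝ) ρ, c s / s) :
    ∀ ρ ∈ Ioo (0:ℝ) ρmax, c ρ ≤ H ρ := by
  intro ρ hρ
  -- the function f(s) = c s / s is continuous on Ioo 0 ρmax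
  have hIoo_open : IsOpen (Ioo (0:ℝ) ρmax) := isOpen_Ioo
  have hccont : ∀ s ∈ Ioo (0:ℝ) ρmax, ContinuousAt (fun t => c t / t) s := by
    intro s hs
    exact ((hcderiv s hs).continuousAt).div continuousAt_id (ne_of_gt hs.1)
  -- G is the interval-integral primitive
  set G : ℝ → ℝ := fun s => ∫ t in (0:ℝ)..s, c t / t with hGdef
  have hGH : ∀ s ∈ Ioo (0:ℝ) ρmax, G s = H s := by
    intro s hs
    rw [hH s hs, hGdef]
    simp [intervalIntegral.integral_of_le (le_of_lt hs.1)]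
  have hGderiv : ∀ s ∈ Ioo (0:ℝ) ρmax, HasDerivAt G (c s / s) s := by
    intro s hs
    refine intervalIntegral.integral_hasDerivAt_right ?_ ?_ (hccont s hs)
    · rw [intervalIntegrable_iff, uIoc_of_le (le_of_lt hs.1)]
      exact hint s hs
    · exact ContinuousAt.stronglyMeasurableAtFilter hIoo_open hccont s hs
  -- key derivative inequality: c' s < c s / s
  have hkey : ∀ s ∈ Ioo (0:ℝ) ρmax, c' s < c s / s := by
    intro s hs
    have hcp := hcpos s hs
    have h2 := (hG s hs).2
    rw [div_lt_iff₀ hcp] at h2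
    rw [lt_div_iff₀ hs.1]
    nlinarith
  -- It suffices to show c ρ ≤ H ρ + δ for every δ > 0
  refine le_of_forall_pos_le_add ?_
  intro δ hδ
  -- find ε ∈ (0, ρ) with c ε < δ
  have hexε : ∃ ε ∈ Ioo (0:ℝ) ρ, c ε < δ := by
    by_contra hcon
    push_neg at hcon
    -- then δ/s ≤ c s / s on Ioo 0 ρ, contradicting integrability
    have hmeas : AEStronglyMeasurable (fun s : ℝ => δ * s⁻¹)
        (volume.restrict (Ioo (0:ℝ) ρ)) := by
      exact (measurable_const.mul measurable_inv).aestronglyMeasurable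
    have hsub : Ioo (0:ℝ) ρ ⊆ Ioc (0:ℝ) ρ := Ioo_subset_Ioc_self
    have hintOn : IntegrableOn (fun s => c s / s) (Ioo 0 ρ) :=
      (hint ρ hρ).mono_set hsub
    have hbound : ∀ᵐ s ∂(volume.restrict (Ioo (0:ℝ) ρ)),
        ‖δ * s⁻¹‖ ≤ ‖c s / s‖ := by
      filter_upwards [ae_restrict_mem measurableSet_Ioo] with s hs
      have hs0 : (0:ℝ) < s := hs.1
      have hδc : δ ≤ c s := hcon s hs
      rw [Real.norm_eq_abs, Real.norm_eq_abs, abs_of_nonneg, abs_of_nonneg]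
      · rw [mul_inv_le_iff₀' hs0]
        have hd : s * (c s / s) = c s := by field_simp
        linarith [hd]
      · exact div_nonneg (le_trans (le_of_lt hδ) hδc) (le_of_lt hs0)
      · positivity
    have hδinv : IntegrableOn (fun s : ℝ => δ * s⁻¹) (Ioo 0 ρ) :=
      Integrable.mono hintOn hmeas hbound
    have hinv : IntegrableOn (fun s : ℝ => s⁻¹) (Ioo (0:ℝ) ρ) := by
      have := hδinv.const_mul δ⁻¹
      simpa [← mul_assoc, inv_mul_cancel₀ (ne_of_gt hδ), IntegrableOn] using this
    have : IntegrableOn (fun s : ℝ => s ^ (-1 : ℝ)) (Ioo (0:ℝ) ρ) := by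
      refine hinv.congr_fun ?_ measurableSet_Ioo
      intro s hs
      simp [Real.rpow_neg_one]
    rw [intervalIntegral.integrableOn_Ioo_rpow_iff hρ.1] at this
    exact lt_irrefl _ this
  obtain ⟨ε, hε, hεδ⟩ := hexε
  have hεmem : ε ∈ Ioo (0:ℝ) ρmax := ⟨hε.1, lt_trans hε.2 hρ.2⟩
  -- φ = G - c is strictly increasing on [ε, ρ]
  have hIcc_sub : Icc ε ρ ⊆ Ioo (0:ℝ) ρmax := fun x hx =>
    ⟨lt_of_lt_of_le hε.1 hx.1, lt_of_le_of_lt hx.2 hρ.2⟩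
  have hφderiv : ∀ x ∈ Icc ε ρ, HasDerivAt (fun s => G s - c s) (c x / x - c' x) x := by
    intro x hx
    exact (hGderiv x (hIcc_sub hx)).sub (hcderiv x (hIcc_sub hx))
  have hφmono : StrictMonoOn (fun s => G s - c s) (Icc ε ρ) := by
    refine strictMonoOn_of_deriv_pos (convex_Icc ε ρ)
      (fun x hx => ((hφderiv x hx).continuousAt).continuousWithinAt) ?_
    intro x hx
    rw [interior_Icc] at hx
    have hxm : x ∈ Icc ε ρ := Ioo_subset_Icc_self hx
    rw [(hφderiv x hxm).deriv]
    have := hkey x (hIcc_sub hxm)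
    linarith
  have hεle : ε ∈ Icc ε ρ := ⟨le_refl _, le_of_lt hε.2⟩
  have hρle : ρ ∈ Icc ε ρ := ⟨le_of_lt hε.2, le_refl _⟩
  have hlt : G ε - c ε < G ρ - c ρ := hφmono hεle hρle hε.2
  -- G ε ≥ 0 since the integrand is nonneg on Ioc 0 ε
  have hGε : 0 ≤ G ε := by
    rw [hGdef]
    simp only
    rw [intervalIntegral.integral_of_le (le_of_lt hε.1)]
    refine setIntegral_nonneg measurableSet_Ioc ?_
    intro t ht
    have htmem : t ∈ Ioo (0:ℝ) ρmax := ⟨ht.1, lt_of_le_of_lt ht.2 hεmem.2⟩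
    exact div_nonneg (le_of_lt (hcpos t htmem)) (le_of_lt ht.1)
  have := hGH ρ hρ
  linarith
end

section
/- Let p : (0, ρ_max) → ℝ be C¹ with p'(ρ) = c(ρ)² where c > 0, let H(ρ) = ∫₀^ρ c(s)/s ds (assumed finite), and fix ρ⁺ > 0. Define F(ρ, ρ⁺) = (p(ρ) − p(ρ⁺))·(1/ρ⁺ − 1/ρ) for ρ ≥ ρ⁺. Then for all ρ ≥ ρ⁺, H(ρ) − H(ρ⁺) ≤ √(F(ρ, ρ⁺)). -/
open Set MeasureTheory

/-- With pressure `p` satisfying `p' = c²`, `c > 0`, and Riemann invariant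
`H(ρ) = ∫₀^ρ c(s)/s ds`, for any fixed `ρ⁺ > 0` and `F(ρ,ρ⁺) = (p ρ − p ρ⁺)(1/ρ⁺ − 1/ρ)`
one has `H(ρ) − H(ρ⁺) ≤ √(F(ρ,ρ⁺))` for all `ρ ≥ ρ⁺`. -/
theorem H_diff_le_sqrt_F (ρmax : ℝ) (p c H : ℝ → ℝ)
    (hcpos : ∀ ρ ∈ Ioo (0:ℝ) ρmax, 0 < c ρ)
    (hp : ∀ ρ ∈ Ioo (0:ℝ) ρmax, HasDerivAt p ((c ρ) ^ 2) ρ)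
    (hint : ∀ ρ ∈ Ioo (0:ℝ) ρmax, IntegrableOn (fun s => c s / s) (Ioc 0 ρ))
    (hH : ∀ ρ ∈ Ioo (0:ℝ) ρmax, H ρ = ∫ s in Ioc (0:ℝ) ρ, c s / s)
    (ρp : ℝ) (hρp : ρp ∈ Ioo (0:ℝ) ρmax) :
    ∀ ρ ∈ Ico ρp ρmax,
      H ρ - H ρp ≤ Real.sqrt ((p ρ - p ρp) * (1 / ρp - 1 / ρ)) := by
  intro ρ hρ
  obtain ⟨hle, hρmax⟩ := hρ
  have hρp0 : 0 < ρp := hρp.1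
  have hρ0 : 0 < ρ := hρp0.trans_le hle
  have hρIoo : ρ ∈ Ioo (0:ℝ) ρmax := ⟨hρ0, hρmax⟩
  have hsub : Ioc ρp ρ ⊆ Ioo (0:ℝ) ρmax :=
    fun s hs => ⟨hρp0.trans hs.1, lt_of_le_of_lt hs.2 hρmax⟩
  have hIccsub : Icc ρp ρ ⊆ Ioo (0:ℝ) ρmax :=
    fun s hs => ⟨hρp0.trans_le hs.1, lt_of_le_of_lt hs.2 hρmax⟩
  have hpdiff : ∀ x ∈ Icc ρp ρ, HasDerivAt p ((c x) ^ 2) x :=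
    fun x hx => hp x (hIccsub hx)
  have hpcont : ContinuousOn p (Icc ρp ρ) :=
    fun x hx => (hpdiff x hx).continuousAt.continuousWithinAt
  -- c² is integrable on (ρp, ρ] since p is monotone with derivative c²
  have hc2int : IntegrableOn (fun s => (c s) ^ 2) (Ioc ρp ρ) :=
    intervalIntegral.integrableOn_deriv_of_nonneg hpcont
      (fun x hx => hpdiff x (Ioo_subset_Icc_self hx)) (fun x _ => sq_nonneg _)
  -- FTC : ∫ c² = p ρ - p ρp
  have hFTC : ∫ s in Ioc ρp ρ, (c s) ^ 2 = p ρ - p ρp := by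
    have h1 : IntervalIntegrable (fun s => (c s) ^ 2) volume ρp ρ :=
      (intervalIntegrable_iff_integrableOn_Ioc_of_le hle).2 hc2int
    have h2 := intervalIntegral.integral_eq_sub_of_hasDerivAt
      (f := p) (f' := fun s => (c s) ^ 2)
      (fun x hx => hpdiff x (by rwa [uIcc_of_le hle] at hx)) h1
    rw [intervalIntegral.integral_of_le hle] at h2
    simpa [MeasureTheory.integral_Ioc_eq_integral_Ioo] using h2
  -- ∫ 1/s² = 1/ρp - 1/ρ
  have hinv : ∫ s in Ioc ρp ρ, (s⁻¹) ^ 2 = 1 / ρp - 1 / ρ := by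
    have hderiv : ∀ x ∈ uIcc ρp ρ, HasDerivAt (fun s : ℝ => -(s⁻¹)) ((x⁻¹) ^ 2) x := by
      intro x hx
      rw [uIcc_of_le hle] at hx
      have hx0 : x ≠ 0 := (hρp0.trans_le hx.1).ne'
      have := (hasDerivAt_inv hx0).neg
      refine this.congr_deriv ?_
      rw [neg_neg, inv_pow]
    have hcont : IntervalIntegrable (fun s : ℝ => (s⁻¹) ^ 2) volume ρp ρ := by
      apply ContinuousOn.intervalIntegrable
      apply ContinuousOn.pow
      apply ContinuousOn.inv₀ continuousOn_id
      intro x hx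
      rw [uIcc_of_le hle] at hx
      exact (hρp0.trans_le hx.1).ne'
    have h2 := intervalIntegral.integral_eq_sub_of_hasDerivAt hderiv hcont
    rw [intervalIntegral.integral_of_le hle] at h2
    rw [h2]
    field_simp
    ring
  -- H ρ - H ρp = ∫_{Ioc ρp ρ} c/s
  have hHdiff : H ρ - H ρp = ∫ s in Ioc ρp ρ, c s / s := by
    rw [hH ρ hρIoo, hH ρp hρp]
    have hunion : Ioc (0:ℝ) ρ = Ioc 0 ρp ∪ Ioc ρp ρ := (Ioc_union_Ioc_eq_Ioc hρp0.le hle).symm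
    have hdisj : Disjoint (Ioc (0:ℝ) ρp) (Ioc ρp ρ) := Ioc_disjoint_Ioc_of_le le_rfl
    rw [hunion, MeasureTheory.setIntegral_union hdisj measurableSet_Ioc
      (hint ρp hρp) ((hint ρ hρIoo).mono_set (Ioc_subset_Ioc hρp0.le le_rfl))]
    ring
  -- measurability of c on the restricted measure
  have hcmeas : AEStronglyMeasurable c (volume.restrict (Ioc ρp ρ)) := by
    have hm : Measurable (fun s => Real.sqrt (deriv p s)) :=
      Real.continuous_sqrt.measurable.comp (measurable_deriv p)
    refine hm.aestronglyMeasurable.congr ?_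
    filter_upwards [ae_restrict_mem measurableSet_Ioc] with s hs
    have hs' := hsub hs
    rw [(hp s hs').deriv, Real.sqrt_sq (hcpos s hs').le]
  -- nonnegativity a.e.
  have hcnn : 0 ≤ᵐ[volume.restrict (Ioc ρp ρ)] c := by
    filter_upwards [ae_restrict_mem measurableSet_Ioc] with s hs
    exact (hcpos s (hsub hs)).le
  have hinn : 0 ≤ᵐ[volume.restrict (Ioc ρp ρ)] (fun s : ℝ => s⁻¹) := by
    filter_upwards [ae_restrict_mem measurableSet_Ioc] with s hs
    exact (inv_pos.2 (hρp0.trans hs.1)).le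
  -- Memℒp facts
  have hcL2 : MemLp c (ENNReal.ofReal 2) (volume.restrict (Ioc ρp ρ)) := by
    rw [show ENNReal.ofReal 2 = 2 by norm_num]
    exact (memLp_two_iff_integrable_sq hcmeas).2 hc2int
  have hinvL2 : MemLp (fun s : ℝ => s⁻¹) (ENNReal.ofReal 2) (volume.restrict (Ioc ρp ρ)) := by
    rw [show ENNReal.ofReal 2 = 2 by norm_num]
    refine (memLp_two_iff_integrable_sq (measurable_inv.aestronglyMeasurable)).2 ?_
    have : ContinuousOn (fun s : ℝ => (s⁻¹) ^ 2) (Icc ρp ρ) := by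
      apply ContinuousOn.pow
      exact ContinuousOn.inv₀ continuousOn_id (fun x hx => (hρp0.trans_le hx.1).ne')
    exact ((this.integrableOn_compact isCompact_Icc).mono_set Ioc_subset_Icc_self)
  -- Hölder (Cauchy–Schwarz)
  have hconj : Real.HolderConjugate 2 2 := by
    constructor <;> norm_num
  have hCS := MeasureTheory.integral_mul_le_Lp_mul_Lq_of_nonneg hconj hcnn hinn hcL2 hinvL2
  simp only [Real.rpow_two] at hCS
  rw [hFTC, hinv] at hCS
  have hdiv : (∫ s in Ioc ρp ρ, c s / s) = ∫ s in Ioc ρp ρ, c s * s⁻¹ := by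
    simp [div_eq_mul_inv]
  have hpnn : 0 ≤ p ρ - p ρp := by
    rw [← hFTC]
    exact MeasureTheory.integral_nonneg (fun s => sq_nonneg _)
  calc H ρ - H ρp = ∫ s in Ioc ρp ρ, c s * s⁻¹ := by rw [hHdiff, hdiv]
    _ ≤ (p ρ - p ρp) ^ ((1:ℝ) / 2) * (1 / ρp - 1 / ρ) ^ ((1:ℝ) / 2) := hCS
    _ = Real.sqrt ((p ρ - p ρp) * (1 / ρp - 1 / ρ)) := by
        rw [Real.sqrt_eq_rpow, Real.mul_rpow hpnn]
        · rw [← hinv]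
          exact MeasureTheory.integral_nonneg (fun s => sq_nonneg _)
end

section
/- Under the assumptions of the previous lemma, let u⁺ ∈ ℝ, ρ⁻ ≥ ρ⁺ > 0, and define u⁻ = u⁺ + √(F(ρ⁻, ρ⁺)) where F(ρ,ρ⁺) = (p(ρ) − p(ρ⁺))(1/ρ⁺ − 1/ρ). Then u⁻ − H(ρ⁻) ≥ u⁺ − H(ρ⁺). In particular, if u⁺ − H(ρ⁺) ≥ 0 then u⁻ − H(ρ⁻) ≥ 0. -/
open Set MeasureTheory

/-- Rankine–Hugoniot consequence: with `u⁻ = u⁺ + √(F(ρ⁻,ρ⁺))`,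
`F(ρ,ρ⁺) = (p ρ − p ρ⁺)(1/ρ⁺ − 1/ρ)` and `ρ⁻ ≥ ρ⁺ > 0`, the first Riemann invariant
increases through the shock: `u⁻ − H(ρ⁻) ≥ u⁺ − H(ρ⁺)`; in particular nonnegativity
of `w₁⁺` implies that of `w₁⁻`. -/
theorem w1_jump (ρmax : ℝ) (p c H : ℝ → ℝ)
    (hcpos : ∀ ρ ∈ Ioo (0:ℝ) ρmax, 0 < c ρ)
    (hp : ∀ ρ ∈ Ioo (0:ℝ) ρmax, HasDerivAt p ((c ρ) ^ 2) ρ)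
    (hint : ∀ ρ ∈ Ioo (0:ℝ) ρmax, IntegrableOn (fun s => c s / s) (Ioc 0 ρ))
    (hH : ∀ ρ ∈ Ioo (0:ℝ) ρmax, H ρ = ∫ s in Ioc (0:ℝ) ρ, c s / s)
    (up um ρm ρp : ℝ)
    (hρp : ρp ∈ Ioo (0:ℝ) ρmax) (hρm : ρm ∈ Ioo (0:ℝ) ρmax) (hle : ρp ≤ ρm)
    (hum : um = up + Real.sqrt ((p ρm - p ρp) * (1 / ρp - 1 / ρm))) :
    um - H ρm ≥ up - H ρp ∧ (0 ≤ up - H ρp → 0 ≤ um - H ρm) := by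
  have hp0 : 0 < ρp := hρp.1
  have hm0 : 0 < ρm := lt_of_lt_of_le hp0 hle
  have hmem : ∀ x ∈ Icc ρp ρm, x ∈ Ioo (0:ℝ) ρmax :=
    fun x hx => ⟨lt_of_lt_of_le hp0 hx.1, lt_of_le_of_lt hx.2 hρm.2⟩
  have hInt : ∀ ρ ∈ Ioo (0:ℝ) ρmax, IntervalIntegrable (fun s => c s / s) volume 0 ρ :=
    fun ρ hρ => (intervalIntegrable_iff_integrableOn_Ioc_of_le hρ.1.le).2 (hint ρ hρ)
  set I : ℝ := ∫ x in ρp..ρm, c x / x with hI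
  have hHdiff : H ρm - H ρp = I := by
    rw [hH ρm hρm, hH ρp hρp,
      ← intervalIntegral.integral_of_le hm0.le, ← intervalIntegral.integral_of_le hp0.le]
    exact intervalIntegral.integral_interval_sub_left (hInt ρm hρm) (hInt ρp hρp)
  set Δp : ℝ := p ρm - p ρp with hΔp
  set Δi : ℝ := 1 / ρp - 1 / ρm with hΔi
  have hΔi0 : 0 ≤ Δi := by
    have := one_div_le_one_div_of_le hp0 hle
    rw [hΔi]; linarith
  have hpc : ContinuousOn p (Icc ρp ρm) := fun x hx =>
    (hp x (hmem x hx)).continuousAt.continuousWithinAt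
  have hΔp0 : 0 ≤ Δp := by
    have hmono : MonotoneOn p (Icc ρp ρm) := by
      apply monotoneOn_of_deriv_nonneg (convex_Icc _ _) hpc
      · intro x hx
        rw [interior_Icc] at hx
        exact ((hp x (hmem x (Ioo_subset_Icc_self hx))).differentiableAt).differentiableWithinAt
      · intro x hx
        rw [interior_Icc] at hx
        rw [(hp x (hmem x (Ioo_subset_Icc_self hx))).deriv]
        positivity
    have := hmono (left_mem_Icc.2 hle) (right_mem_Icc.2 hle) hle
    rw [hΔp]; linarith
  -- key bound for each t > 0
  have key : ∀ t : ℝ, 0 < t → I ≤ (t * Δp + t⁻¹ * Δi) / 2 := by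
    intro t ht
    set g : ℝ → ℝ := fun x => (t * p x - t⁻¹ / x) / 2 with hg
    have hderiv : ∀ x ∈ Ioo ρp ρm,
        HasDerivWithinAt g ((t * (c x) ^ 2 + t⁻¹ / x ^ 2) / 2) (Ioi x) x := by
      intro x hx
      have hx0 : (0:ℝ) < x := lt_trans hp0 hx.1
      have h1 : HasDerivAt g
          ((t * (c x) ^ 2 - t⁻¹ * (-(x ^ 2)⁻¹)) / 2) x :=
        (((hp x (hmem x (Ioo_subset_Icc_self hx))).const_mul t).sub
          ((hasDerivAt_inv hx0.ne').const_mul t⁻¹)).div_const 2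
      have heq : (t * (c x) ^ 2 - t⁻¹ * (-(x ^ 2)⁻¹)) / 2
          = (t * (c x) ^ 2 + t⁻¹ / x ^ 2) / 2 := by
        field_simp
        ring
      rw [heq] at h1
      exact h1.hasDerivWithinAt
    have hcontg : ContinuousOn g (Icc ρp ρm) := by
      apply ContinuousOn.div_const
      apply (hpc.const_smul t).sub
      exact ContinuousOn.div continuousOn_const continuousOn_id
        (fun x hx => (lt_of_lt_of_le hp0 hx.1).ne')
    have hφint : IntegrableOn (fun s => c s / s) (Icc ρp ρm) volume :=
      (hint ρm hρm).mono_set (fun x hx => ⟨lt_of_lt_of_le hp0 hx.1, hx.2⟩)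
    have hφg : ∀ x ∈ Ioo ρp ρm, c x / x ≤ (t * (c x) ^ 2 + t⁻¹ / x ^ 2) / 2 := by
      intro x hx
      have hx0 : (0:ℝ) < x := lt_trans hp0 hx.1
      have h2 : (0:ℝ) ≤ (t * c x * x - 1) ^ 2 := sq_nonneg _
      have expand : (t * (c x) ^ 2 + t⁻¹ / x ^ 2) / 2 - c x / x
          = (t * c x * x - 1) ^ 2 / (2 * t * x ^ 2) := by
        field_simp
        ring
      have h3 : (0:ℝ) ≤ (t * c x * x - 1) ^ 2 / (2 * t * x ^ 2) :=
        div_nonneg h2 (by positivity)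
      linarith [expand ▸ h3]
    have hbound :=
      intervalIntegral.integral_le_sub_of_hasDeriv_right_of_le hle hcontg hderiv hφint hφg
    have hgdiff : g ρm - g ρp = (t * Δp + t⁻¹ * Δi) / 2 := by
      simp only [hg, hΔp, hΔi]
      field_simp
      ring
    calc I ≤ g ρm - g ρp := hbound
      _ = (t * Δp + t⁻¹ * Δi) / 2 := hgdiff
  -- conclude: I ≤ sqrt (Δp * Δi)
  have main : I ≤ Real.sqrt (Δp * Δi) := by
    rcases eq_or_lt_of_le hΔp0 with h0 | hpos
    · have hI0 : I ≤ 0 := by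
        by_contra h
        push_neg at h
        have hipos : 0 < Δi / I → True := fun _ => trivial
        have ht : 0 < Δi / I + 1 := by positivity
        have hk := key (Δi / I + 1) ht
        rw [← h0] at hk
        have h2 : (Δi / I + 1)⁻¹ * Δi ≤ I := by
          rw [inv_mul_le_iff₀ ht]
          have h3 : Δi ≤ (Δi / I) * I := by
            rw [div_mul_cancel₀ _ h.ne']
          nlinarith
        nlinarith
      exact hI0.trans (Real.sqrt_nonneg _)
    · rcases eq_or_lt_of_le hΔi0 with hi0 | hipos
      · have hpe : ρp = ρm := by
          have h1 : 1 / ρp = 1 / ρm := by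
            have h := hi0.symm
            rw [hΔi] at h
            linarith
          field_simp at h1
          linarith
        have : I = 0 := by rw [hI, hpe, intervalIntegral.integral_same]
        rw [this]; exact Real.sqrt_nonneg _
      · set t : ℝ := Real.sqrt (Δi / Δp) with htdef
        have ht : 0 < t := Real.sqrt_pos.2 (div_pos hipos hpos)
        have ht2 : t ^ 2 = Δi / Δp := Real.sq_sqrt (div_pos hipos hpos).le
        have h1 : t * Δp = Real.sqrt (Δp * Δi) := by
          rw [show Δp * Δi = (t * Δp) ^ 2 by
            rw [mul_pow, ht2]; field_simp]
          rw [Real.sqrt_sq (by positivity)]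
        have h2 : t⁻¹ * Δi = Real.sqrt (Δp * Δi) := by
          rw [show Δp * Δi = (t⁻¹ * Δi) ^ 2 by
            rw [mul_pow, inv_pow, ht2]; field_simp]
          rw [Real.sqrt_sq (by positivity)]
        have hk := key t ht
        rw [h1, h2] at hk
        linarith
  have hfinal : um - H ρm ≥ up - H ρp := by
    have : um - up = Real.sqrt (Δp * Δi) := by
      rw [hum, hΔp, hΔi]; ring
    linarith [hHdiff, main, this]
  exact ⟨hfinal, fun h => le_trans h hfinal⟩
end

section
/- Let p be C¹ on (0, ρ_max) with p'(ρ) = c(ρ)² > 0, and suppose 𝒢(ρ) = (1/c)·d/dρ(ρc) > 0. Fix ρ⁺ > 0 and define ξ(ρ, ρ⁺) = p(ρ) − p(ρ⁺) − (ρ c(ρ))² (1/ρ⁺ − 1/ρ) for ρ ≥ ρ⁺. Then ∂ξ/∂ρ = −2ρ c(ρ)² 𝒢(ρ)·(1/ρ⁺ − 1/ρ) ≤ 0, and consequently ξ(ρ, ρ⁺) ≤ 0 for all ρ ≥ ρ⁺. -/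
open Set

/-- With `p' = c² > 0` and positive fundamental derivative
`𝒢 = (1/c)·d/dρ(ρc) = (c + ρ c')/c > 0`, the function
`ξ(ρ,ρ⁺) = p ρ − p ρ⁺ − (ρ c ρ)²(1/ρ⁺ − 1/ρ)` has derivative
`−2ρ c² 𝒢 (1/ρ⁺ − 1/ρ) ≤ 0` on `ρ ≥ ρ⁺`, hence `ξ ≤ 0` there. -/
theorem xi_nonpos (ρmax : ℝ) (p c c' : ℝ → ℝ)
    (hcpos : ∀ ρ ∈ Ioo (0:ℝ) ρmax, 0 < c ρ)
    (hcd : ∀ ρ ∈ Ioo (0:ℝ) ρmax, HasDerivAt c (c' ρ) ρ)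
    (hp : ∀ ρ ∈ Ioo (0:ℝ) ρmax, HasDerivAt p ((c ρ) ^ 2) ρ)
    (G : ℝ → ℝ)
    (hGdef : ∀ ρ ∈ Ioo (0:ℝ) ρmax, G ρ = (c ρ + ρ * c' ρ) / c ρ)
    (hGpos : ∀ ρ ∈ Ioo (0:ℝ) ρmax, 0 < G ρ)
    (ρp : ℝ) (hρp : ρp ∈ Ioo (0:ℝ) ρmax)
    (ξ : ℝ → ℝ)
    (hξ : ∀ ρ, ξ ρ = p ρ - p ρp - (ρ * c ρ) ^ 2 * (1 / ρp - 1 / ρ)) :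
    (∀ ρ ∈ Ico ρp ρmax,
        HasDerivAt ξ (-2 * ρ * (c ρ) ^ 2 * G ρ * (1 / ρp - 1 / ρ)) ρ ∧
        -2 * ρ * (c ρ) ^ 2 * G ρ * (1 / ρp - 1 / ρ) ≤ 0) ∧
    (∀ ρ ∈ Ico ρp ρmax, ξ ρ ≤ 0) := by
  have hsub : Ico ρp ρmax ⊆ Ioo (0:ℝ) ρmax := by
    intro x hx
    exact ⟨lt_of_lt_of_le hρp.1 hx.1, hx.2⟩
  have hξeq : ξ = fun ρ => p ρ - p ρp - (ρ * c ρ) ^ 2 * (1 / ρp - 1 / ρ) :=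
    funext hξ
  have key : ∀ ρ ∈ Ico ρp ρmax,
      HasDerivAt ξ (-2 * ρ * (c ρ) ^ 2 * G ρ * (1 / ρp - 1 / ρ)) ρ ∧
      -2 * ρ * (c ρ) ^ 2 * G ρ * (1 / ρp - 1 / ρ) ≤ 0 := by
    intro ρ hρ
    have hρI : ρ ∈ Ioo (0:ℝ) ρmax := hsub hρ
    have hρ0 : ρ ≠ 0 := ne_of_gt hρI.1
    have hc0 : c ρ ≠ 0 := ne_of_gt (hcpos ρ hρI)
    have hinv : HasDerivAt (fun x : ℝ => 1 / ρp - 1 / x) ((ρ^2)⁻¹) ρ := by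
      simpa [one_div] using (hasDerivAt_inv hρ0).const_sub (1/ρp)
    have hprod : HasDerivAt (fun x => (x * c x) ^ 2 * (1 / ρp - 1 / x))
        ((2 * (ρ * c ρ) ^ 1 * (1 * c ρ + ρ * c' ρ)) * (1 / ρp - 1 / ρ)
          + (ρ * c ρ) ^ 2 * ((ρ^2)⁻¹)) ρ :=
      (((hasDerivAt_id ρ).mul (hcd ρ hρI)).pow 2).mul hinv
    have hd : HasDerivAt ξ
        ((c ρ)^2 - ((2 * (ρ * c ρ) ^ 1 * (1 * c ρ + ρ * c' ρ)) * (1 / ρp - 1 / ρ)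
          + (ρ * c ρ) ^ 2 * ((ρ^2)⁻¹))) ρ := by
      rw [hξeq]
      exact ((hp ρ hρI).sub_const (p ρp)).sub hprod
    have heq : (c ρ)^2 - ((2 * (ρ * c ρ) ^ 1 * (1 * c ρ + ρ * c' ρ)) * (1 / ρp - 1 / ρ)
          + (ρ * c ρ) ^ 2 * ((ρ^2)⁻¹))
        = -2 * ρ * (c ρ) ^ 2 * G ρ * (1 / ρp - 1 / ρ) := by
      rw [hGdef ρ hρI]
      field_simp
      ring
    rw [heq] at hd
    refine ⟨hd, ?_⟩
    have h1 : 0 ≤ 1 / ρp - 1 / ρ := by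
      have : 1 / ρ ≤ 1 / ρp := one_div_le_one_div_of_le hρp.1 hρ.1
      linarith
    have h2 : 0 ≤ 2 * ρ * (c ρ) ^ 2 * G ρ := by
      have := hGpos ρ hρI
      have := hρI.1
      positivity
    nlinarith
  refine ⟨key, ?_⟩
  intro ρ hρ
  have hanti : AntitoneOn ξ (Ico ρp ρmax) := by
    apply antitoneOn_of_deriv_nonpos (convex_Ico ρp ρmax)
    · intro x hx
      exact ((key x hx).1).continuousAt.continuousWithinAt
    · intro x hx
      rw [interior_Ico] at hx
      exact ((key x ⟨le_of_lt hx.1, hx.2⟩).1).differentiableAt.differentiableWithinAt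
    · intro x hx
      rw [interior_Ico] at hx
      have h := key x ⟨le_of_lt hx.1, hx.2⟩
      rw [h.1.deriv]
      exact h.2
  have h0 : ξ ρp = 0 := by
    rw [hξ ρp]; ring
  have := hanti ⟨le_refl ρp, lt_of_le_of_lt hρ.1 hρ.2⟩ hρ hρ.1
  linarith
end

section
/- For a gas with p' = c² > 0 and 𝒢 > 0, a 2-shock satisfying the jump conditions U = (ρ⁺u⁺ − ρ⁻u⁻)/(ρ⁺ − ρ⁻), u⁻ − u⁺ = √((p⁻ − p⁺)(1/ρ⁺ − 1/ρ⁻)), and ρ⁻ > ρ⁺ satisfies the full Lax entropy conditions: λ₁(ρ⁻,u⁻) < U < λ₂(ρ⁻,u⁻) and U ≥ λ₂(ρ⁺,u⁺), where λ₁ = u − c(ρ) and λ₂ = u + c(ρ). -/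
lemma lemF (p c c' : ℝ → ℝ)
    (hcpos : ∀ ρ > (0:ℝ), 0 < c ρ)
    (hcd : ∀ ρ > (0:ℝ), HasDerivAt c (c' ρ) ρ)
    (hp : ∀ ρ > (0:ℝ), HasDerivAt p ((c ρ) ^ 2) ρ)
    (hG : ∀ ρ > (0:ℝ), 0 < (c ρ + ρ * c' ρ) / c ρ)
    (a b : ℝ) (ha : 0 < a) (hab : a < b) :
    p b - p a < (b * c b)^2 * (1/a - 1/b) := by
  set F : ℝ → ℝ := fun ρ => p ρ - p a - (ρ * c ρ)^2 * (1/a - 1/ρ) with hFdef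
  have hcc : ∀ x > (0:ℝ), 0 < c x + x * c' x := by
    intro x hx
    have h1 := hG x hx
    have h2 := hcpos x hx
    have := mul_pos h1 h2
    rwa [div_mul_cancel₀ _ (ne_of_gt h2)] at this
  have hder : ∀ x > (0:ℝ), HasDerivAt F (-2*(x*c x)*(c x + x*c' x)*(1/a - 1/x)) x := by
    intro x hx
    have h1 := hp x hx
    have hc := hcd x hx
    have h2 : HasDerivAt (fun ρ => ρ * c ρ) (1 * c x + x * c' x) x :=
      (hasDerivAt_id x).mul hc
    have h3 : HasDerivAt (fun ρ => (ρ * c ρ)^2)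
        ((2:ℕ) * (x * c x)^1 * (1 * c x + x * c' x)) x := h2.pow 2
    have h4 : HasDerivAt (fun ρ : ℝ => 1/a - 1/ρ) (-(-(x^2)⁻¹)) x := by
      simpa [one_div] using (hasDerivAt_inv (ne_of_gt hx)).const_sub (1/a)
    have h5 := h3.mul h4
    have h6 := (h1.sub_const (p a)).sub h5
    refine h6.congr_deriv ?_
    have hx0 : x ≠ 0 := ne_of_gt hx
    field_simp
    ring
  have hanti : StrictAntiOn F (Set.Icc a b) := by
    apply strictAntiOn_of_deriv_neg (convex_Icc a b)
    · intro x hx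
      exact ((hder x (lt_of_lt_of_le ha hx.1)).continuousAt).continuousWithinAt
    · intro x hx
      rw [interior_Icc] at hx
      have hx0 : 0 < x := lt_trans ha hx.1
      rw [(hder x hx0).deriv]
      have h1 : 0 < 1/a - 1/x := by
        rw [sub_pos]
        exact one_div_lt_one_div_of_lt ha hx.1
      have h2 : 0 < x * c x := mul_pos hx0 (hcpos x hx0)
      have h3 := hcc x hx0
      nlinarith [mul_pos (mul_pos h2 h3) h1]
  have hFa : F a = 0 := by simp [hFdef]
  have := hanti (Set.left_mem_Icc.2 (le_of_lt hab)) (Set.right_mem_Icc.2 (le_of_lt hab)) hab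
  rw [hFa] at this
  have : F b < 0 := this
  simp only [hFdef] at this
  linarith

lemma lemG (p c c' : ℝ → ℝ)
    (hcpos : ∀ ρ > (0:ℝ), 0 < c ρ)
    (hcd : ∀ ρ > (0:ℝ), HasDerivAt c (c' ρ) ρ)
    (hp : ∀ ρ > (0:ℝ), HasDerivAt p ((c ρ) ^ 2) ρ)
    (hG : ∀ ρ > (0:ℝ), 0 < (c ρ + ρ * c' ρ) / c ρ)
    (a b : ℝ) (ha : 0 < a) (hab : a < b) :
    (a * c a)^2 * (1/a - 1/b) < p b - p a := by
  set G : ℝ → ℝ := fun ρ => p b - p ρ - (ρ * c ρ)^2 * (1/ρ - 1/b) with hGdef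
  have hcc : ∀ x > (0:ℝ), 0 < c x + x * c' x := by
    intro x hx
    have h1 := hG x hx
    have h2 := hcpos x hx
    have := mul_pos h1 h2
    rwa [div_mul_cancel₀ _ (ne_of_gt h2)] at this
  have hder : ∀ x > (0:ℝ), HasDerivAt G (-2*(x*c x)*(c x + x*c' x)*(1/x - 1/b)) x := by
    intro x hx
    have h1 := hp x hx
    have hc := hcd x hx
    have h2 : HasDerivAt (fun ρ => ρ * c ρ) (1 * c x + x * c' x) x :=
      (hasDerivAt_id x).mul hc
    have h3 : HasDerivAt (fun ρ => (ρ * c ρ)^2)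
        ((2:ℕ) * (x * c x)^1 * (1 * c x + x * c' x)) x := h2.pow 2
    have h4 : HasDerivAt (fun ρ : ℝ => 1/ρ - 1/b) (-(x^2)⁻¹) x := by
      simpa [one_div] using (hasDerivAt_inv (ne_of_gt hx)).sub_const (1/b)
    have h5 := h3.mul h4
    have h6 := ((hasDerivAt_const x (p b)).sub h1).sub h5
    refine h6.congr_deriv ?_
    have hx0 : x ≠ 0 := ne_of_gt hx
    field_simp
    ring
  have hanti : StrictAntiOn G (Set.Icc a b) := by
    apply strictAntiOn_of_deriv_neg (convex_Icc a b)
    · intro x hx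
      exact ((hder x (lt_of_lt_of_le ha hx.1)).continuousAt).continuousWithinAt
    · intro x hx
      rw [interior_Icc] at hx
      have hx0 : 0 < x := lt_trans ha hx.1
      rw [(hder x hx0).deriv]
      have hb0 : 0 < b := lt_trans hx0 hx.2
      have h1 : 0 < 1/x - 1/b := by
        rw [sub_pos]
        exact one_div_lt_one_div_of_lt hx0 hx.2
      have h2 : 0 < x * c x := mul_pos hx0 (hcpos x hx0)
      have h3 := hcc x hx0
      nlinarith [mul_pos (mul_pos h2 h3) h1]
  have hGb : G b = 0 := by simp [hGdef]
  have := hanti (Set.left_mem_Icc.2 (le_of_lt hab)) (Set.right_mem_Icc.2 (le_of_lt hab)) hab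
  rw [hGb] at this
  simp only [hGdef] at this
  linarith

/-- Lax entropy conditions for a 2-shock of a Bethe–Weyl gas (`p' = c² > 0`, `𝒢 > 0`):
the Rankine–Hugoniot conditions together with `ρ⁻ > ρ⁺` imply
`λ₁(ρ⁻,u⁻) < U < λ₂(ρ⁻,u⁻)` and `U ≥ λ₂(ρ⁺,u⁺)`, where `λ₁ = u − c`, `λ₂ = u + c`. -/
theorem lax_entropy_conditions (p c c' : ℝ → ℝ)
    (hcpos : ∀ ρ > (0:ℝ), 0 < c ρ)
    (hcd : ∀ ρ > (0:ℝ), HasDerivAt c (c' ρ) ρ)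
    (hp : ∀ ρ > (0:ℝ), HasDerivAt p ((c ρ) ^ 2) ρ)
    (hG : ∀ ρ > (0:ℝ), 0 < (c ρ + ρ * c' ρ) / c ρ)
    (ρm ρp um up U : ℝ) (hρp : 0 < ρp) (hρ : ρp < ρm)
    (hU : U = (ρp * up - ρm * um) / (ρp - ρm))
    (hu : um - up = Real.sqrt ((p ρm - p ρp) * (1 / ρp - 1 / ρm))) :
    um - c ρm < U ∧ U < um + c ρm ∧ U ≥ up + c ρp := by
  have hρm : 0 < ρm := lt_trans hρp hρ
  have hcm : 0 < c ρm := hcpos ρm hρm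
  have hcp : 0 < c ρp := hcpos ρp hρp
  have hd : 0 < ρm - ρp := sub_pos.2 hρ
  have hD : 0 < 1/ρp - 1/ρm := sub_pos.2 (one_div_lt_one_div_of_lt hρp hρ)
  have hDd : ρp * ρm * (1/ρp - 1/ρm) = ρm - ρp := by
    field_simp
  have hF : p ρm - p ρp < (ρm * c ρm)^2 * (1/ρp - 1/ρm) :=
    lemF p c c' hcpos hcd hp hG ρp ρm hρp hρ
  have hG' : (ρp * c ρp)^2 * (1/ρp - 1/ρm) < p ρm - p ρp :=
    lemG p c c' hcpos hcd hp hG ρp ρm hρp hρ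
  have hΔpos : 0 < p ρm - p ρp := lt_trans (by positivity) hG'
  have hs2 : (um - up)^2 = (p ρm - p ρp) * (1/ρp - 1/ρm) := by
    rw [hu]; exact Real.sq_sqrt (by positivity)
  have hs0 : 0 ≤ um - up := by rw [hu]; exact Real.sqrt_nonneg _
  have hne : ρp - ρm ≠ 0 := sub_ne_zero.2 (ne_of_lt hρ)
  have hUeq : U * (ρp - ρm) = ρp * up - ρm * um := by
    rw [hU, div_mul_cancel₀ _ hne]
  have hUm : (U - um) * (ρm - ρp) = ρp * (um - up) := by linear_combination -hUeq
  have hUp : (U - up) * (ρm - ρp) = ρm * (um - up) := by linear_combination -hUeq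
  have key2 : (ρp * (um - up))^2 < (c ρm * (ρm - ρp))^2 := by
    calc (ρp * (um - up))^2
        = ρp^2 * (1/ρp - 1/ρm) * (p ρm - p ρp) := by rw [mul_pow, hs2]; ring
      _ < ρp^2 * (1/ρp - 1/ρm) * ((ρm * c ρm)^2 * (1/ρp - 1/ρm)) :=
          mul_lt_mul_of_pos_left hF (by positivity)
      _ = (c ρm * (ρm - ρp))^2 := by rw [← hDd]; ring
  have key3 : (c ρp * (ρm - ρp))^2 < (ρm * (um - up))^2 := by
    calc (c ρp * (ρm - ρp))^2
        = ρm^2 * (1/ρp - 1/ρm) * ((ρp * c ρp)^2 * (1/ρp - 1/ρm)) := by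
          rw [← hDd]; ring
      _ < ρm^2 * (1/ρp - 1/ρm) * (p ρm - p ρp) :=
          mul_lt_mul_of_pos_left hG' (by positivity)
      _ = (ρm * (um - up))^2 := by rw [mul_pow, hs2]; ring
  have h2 : ρp * (um - up) < c ρm * (ρm - ρp) :=
    lt_of_pow_lt_pow_left₀ 2 (by positivity) key2
  have h3 : c ρp * (ρm - ρp) < ρm * (um - up) :=
    lt_of_pow_lt_pow_left₀ 2 (mul_nonneg hρm.le hs0) key3
  refine ⟨?_, ?_, ?_⟩
  · nlinarith [hUm, hd, mul_nonneg hρp.le hs0, hcm, mul_pos hcm hd]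
  · have h4 : (U - um) * (ρm - ρp) < c ρm * (ρm - ρp) := by rw [hUm]; exact h2
    have := lt_of_mul_lt_mul_right h4 hd.le
    linarith
  · have h4 : c ρp * (ρm - ρp) < (U - up) * (ρm - ρp) := by rw [hUp]; exact h3
    have := lt_of_mul_lt_mul_right h4 hd.le
    linarith
end

section
/- Define ℱ(w₁⁻, w₂⁻, w₁⁺, w₂⁺) = u⁻ − u⁺ − √(F(ρ⁻, ρ⁺)), where u = (w₁+w₂)/2, ρ = H⁻¹((w₂−w₁)/2) with H strictly increasing, and F(ρ⁻,ρ⁺) = (1/ρ⁺ − 1/ρ⁻)(p(ρ⁻) − p(ρ⁺)). Then on the set where ρ⁻ > ρ⁺, the partial derivative ∂ℱ/∂w₁⁻ = (1/(4√F))·(√(ρ⁻c⁻(1/ρ⁺ − 1/ρ⁻)) + √((p⁻−p⁺)/(ρ⁻c⁻)))² > 0. -/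
/-- Strict positivity of `∂ℱ/∂w₁⁻` for the Rankine–Hugoniot compatibility function
`ℱ = u⁻ − u⁺ − √(F(ρ⁻,ρ⁺))`, expressed in the Riemann invariants
`u = (w₁+w₂)/2`, `ρ = H⁻¹((w₂−w₁)/2)`, on the set where `ρ⁻ > ρ⁺`. -/
theorem dF_dw1m_pos (p c H Hinv : ℝ → ℝ)
    (hcpos : ∀ ρ > (0:ℝ), 0 < c ρ)
    (hp : ∀ ρ > (0:ℝ), HasDerivAt p ((c ρ) ^ 2) ρ)
    (hHd : ∀ ρ > (0:ℝ), HasDerivAt H (c ρ / ρ) ρ)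
    (hHinv : ∀ ρ > (0:ℝ), Hinv (H ρ) = ρ)
    (hHinv' : ∀ ρ > (0:ℝ), HasDerivAt Hinv (ρ / c ρ) (H ρ))
    (w1m w2m w1p w2p ρm ρp : ℝ)
    (hρp : 0 < ρp) (hρ : ρp < ρm)
    (hm : H ρm = (w2m - w1m) / 2) (hpp : H ρp = (w2p - w1p) / 2)
    (F : ℝ) (hF : F = (1 / ρp - 1 / ρm) * (p ρm - p ρp)) :
    HasDerivAt
      (fun x => (x + w2m) / 2 - (w1p + w2p) / 2 -
        Real.sqrt ((1 / Hinv ((w2p - w1p) / 2) - 1 / Hinv ((w2m - x) / 2)) *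
          (p (Hinv ((w2m - x) / 2)) - p (Hinv ((w2p - w1p) / 2)))))
      (1 / (4 * Real.sqrt F) *
        (Real.sqrt (ρm * c ρm * (1 / ρp - 1 / ρm)) +
          Real.sqrt ((p ρm - p ρp) / (ρm * c ρm))) ^ 2) w1m ∧
    0 < 1 / (4 * Real.sqrt F) *
        (Real.sqrt (ρm * c ρm * (1 / ρp - 1 / ρm)) +
          Real.sqrt ((p ρm - p ρp) / (ρm * c ρm))) ^ 2 := by
  have hbpos : 0 < ρm := lt_trans hρp hρ
  have hc : 0 < c ρm := hcpos ρm hbpos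
  -- p strictly increasing on [ρp, ρm]
  have hpm : p ρp < p ρm := by
    have hmono : StrictMonoOn p (Set.Icc ρp ρm) := by
      apply strictMonoOn_of_deriv_pos (convex_Icc _ _)
      · intro x hx
        exact ((hp x (lt_of_lt_of_le hρp hx.1)).differentiableAt.continuousAt).continuousWithinAt
      · intro x hx
        rw [interior_Icc] at hx
        have hx0 : 0 < x := lt_trans hρp hx.1
        rw [(hp x hx0).deriv]
        exact pow_pos (hcpos x hx0) 2
    exact hmono (Set.left_mem_Icc.mpr hρ.le) (Set.right_mem_Icc.mpr hρ.le) hρ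
  have hΔρ : 0 < 1/ρp - 1/ρm := by
    rw [sub_pos]
    exact one_div_lt_one_div_of_lt hρp hρ
  have hΔp : 0 < p ρm - p ρp := sub_pos.mpr hpm
  have hFpos : 0 < F := by rw [hF]; exact mul_pos hΔρ hΔp
  have hsF : 0 < Real.sqrt F := Real.sqrt_pos.mpr hFpos
  have hgm : Hinv ((w2m - w1m)/2) = ρm := by rw [← hm, hHinv ρm hbpos]
  have hgp : Hinv ((w2p - w1p)/2) = ρp := by rw [← hpp, hHinv ρp hρp]
  -- positivity part
  have hs1 : 0 < Real.sqrt (ρm * c ρm * (1 / ρp - 1 / ρm)) :=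
    Real.sqrt_pos.mpr (mul_pos (mul_pos hbpos hc) hΔρ)
  have hs2 : 0 ≤ Real.sqrt ((p ρm - p ρp) / (ρm * c ρm)) := Real.sqrt_nonneg _
  have hposgoal : 0 < 1 / (4 * Real.sqrt F) *
        (Real.sqrt (ρm * c ρm * (1 / ρp - 1 / ρm)) +
          Real.sqrt ((p ρm - p ρp) / (ρm * c ρm))) ^ 2 := by
    apply mul_pos
    · positivity
    · exact pow_pos (by linarith) 2
  refine ⟨?_, hposgoal⟩
  -- derivative chain
  have hlin : HasDerivAt (fun x : ℝ => (w2m - x)/2) (-1/2) w1m := by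
    simpa using ((hasDerivAt_id w1m).const_sub w2m).div_const 2
  have hHinvH : HasDerivAt Hinv (ρm / c ρm) ((w2m - w1m)/2) := by
    rw [← hm]; exact hHinv' ρm hbpos
  have hg : HasDerivAt (fun x => Hinv ((w2m - x)/2)) (ρm / c ρm * (-1/2)) w1m :=
    hHinvH.comp w1m hlin
  have hpd : HasDerivAt p ((c ρm) ^ 2) (Hinv ((w2m - w1m)/2)) := by
    rw [hgm]; exact hp ρm hbpos
  have hpg : HasDerivAt (fun x => p (Hinv ((w2m - x)/2)))
      ((c ρm) ^ 2 * (ρm / c ρm * (-1/2))) w1m := hpd.comp w1m hg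
  have hgne : Hinv ((w2m - w1m)/2) ≠ 0 := by rw [hgm]; exact ne_of_gt hbpos
  have hinv : HasDerivAt (fun x => (Hinv ((w2m - x)/2))⁻¹)
      (-(ρm / c ρm * (-1/2)) / ρm ^ 2) w1m := by
    have h := hg.inv hgne
    rw [hgm] at h; exact h
  have hf1 : HasDerivAt (fun x => (ρp)⁻¹ - (Hinv ((w2m - x)/2))⁻¹)
      (-(-(ρm / c ρm * (-1/2)) / ρm ^ 2)) w1m := hinv.const_sub _
  have hf2 : HasDerivAt (fun x => p (Hinv ((w2m - x)/2)) - p ρp)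
      ((c ρm) ^ 2 * (ρm / c ρm * (-1/2))) w1m := hpg.sub_const _
  have hA : HasDerivAt
      (fun x => ((ρp)⁻¹ - (Hinv ((w2m - x)/2))⁻¹) * (p (Hinv ((w2m - x)/2)) - p ρp))
      ((-(-(ρm / c ρm * (-1/2)) / ρm ^ 2)) * (p ρm - p ρp) +
        ((ρp)⁻¹ - (ρm)⁻¹) * ((c ρm) ^ 2 * (ρm / c ρm * (-1/2)))) w1m := by
    have h := hf1.mul hf2
    rw [hgm] at h; exact h
  have hAval : ((ρp)⁻¹ - (Hinv ((w2m - w1m)/2))⁻¹) * (p (Hinv ((w2m - w1m)/2)) - p ρp) = F := by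
    rw [hgm, hF]; ring
  have hAne : ((ρp)⁻¹ - (Hinv ((w2m - w1m)/2))⁻¹) * (p (Hinv ((w2m - w1m)/2)) - p ρp) ≠ 0 := by
    rw [hAval]; exact ne_of_gt hFpos
  have hsqrt := hA.sqrt hAne
  rw [hAval] at hsqrt
  have hlead : HasDerivAt (fun x : ℝ => (x + w2m)/2 - (w1p + w2p)/2) ((1:ℝ)/2) w1m := by
    simpa using (((hasDerivAt_id w1m).add_const w2m).div_const 2).sub_const ((w1p + w2p)/2)
  have htotal := hlead.sub hsqrt
  -- rewrite goal to match
  have hgoalfun : (fun x => (x + w2m) / 2 - (w1p + w2p) / 2 -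
        Real.sqrt ((1 / Hinv ((w2p - w1p) / 2) - 1 / Hinv ((w2m - x) / 2)) *
          (p (Hinv ((w2m - x) / 2)) - p (Hinv ((w2p - w1p) / 2))))) =
      (fun x => (x + w2m)/2 - (w1p + w2p)/2 -
        Real.sqrt (((ρp)⁻¹ - (Hinv ((w2m - x)/2))⁻¹) * (p (Hinv ((w2m - x)/2)) - p ρp))) := by
    funext x
    rw [hgp]
    simp [one_div]
  rw [hgoalfun]
  refine HasDerivAt.congr_deriv htotal ?_
  -- value equality
  set s1 := Real.sqrt (ρm * c ρm * (1 / ρp - 1 / ρm)) with hs1d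
  set s2 := Real.sqrt ((p ρm - p ρp) / (ρm * c ρm)) with hs2d
  have hsq1 : s1 ^ 2 = ρm * c ρm * (1 / ρp - 1 / ρm) :=
    Real.sq_sqrt (le_of_lt (mul_pos (mul_pos hbpos hc) hΔρ))
  have hsq2 : s2 ^ 2 = (p ρm - p ρp) / (ρm * c ρm) :=
    Real.sq_sqrt (le_of_lt (div_pos hΔp (mul_pos hbpos hc)))
  have hs12 : s1 * s2 = Real.sqrt F := by
    rw [hs1d, hs2d, ← Real.sqrt_mul (le_of_lt (mul_pos (mul_pos hbpos hc) hΔρ))]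
    congr 1
    rw [hF]
    field_simp
  have hexp : (s1 + s2) ^ 2 = ρm * c ρm * (1 / ρp - 1 / ρm) + 2 * Real.sqrt F +
      (p ρm - p ρp) / (ρm * c ρm) := by
    have : (s1 + s2) ^ 2 = s1 ^ 2 + 2 * (s1 * s2) + s2 ^ 2 := by ring
    rw [this, hsq1, hsq2, hs12]
  rw [hexp]
  have hFne : Real.sqrt F ≠ 0 := ne_of_gt hsF
  field_simp
  ring
end

section
/- With ℱ defined as above, on the set where ρ⁻ > ρ⁺ one has ∂ℱ/∂w₂⁻ ≤ 0, ∂ℱ/∂w₁⁺ ≤ 0, and ∂ℱ/∂w₂⁺ ≥ 0. Explicitly, ∂ℱ/∂w₂⁻ = −(1/(4√F))·(√(ρ⁻c⁻(1/ρ⁺−1/ρ⁻)) − √((p⁻−p⁺)/(ρ⁻c⁻)))², ∂ℱ/∂w₁⁺ = −(1/(4√F))·(√(ρ⁺c⁺(1/ρ⁺−1/ρ⁻)) + √((p⁻−p⁺)/(ρ⁺c⁺)))², and ∂ℱ/∂w₂⁺ = (1/(4√F))·(√(ρ⁺c⁺(1/ρ⁺−1/ρ⁻)) − √((p⁻−p⁺)/(ρ⁺c⁺)))².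 -/
/-- Signs of the partial derivatives `∂ℱ/∂w₂⁻ ≤ 0`, `∂ℱ/∂w₁⁺ ≤ 0`, `∂ℱ/∂w₂⁺ ≥ 0`
(with their explicit expressions) of the Rankine–Hugoniot compatibility function
`ℱ = u⁻ − u⁺ − √(F(ρ⁻,ρ⁺))` in the Riemann invariants, where `ρ⁻ > ρ⁺`. -/
theorem dF_signs (p c H Hinv : ℝ → ℝ)
    (hcpos : ∀ ρ > (0:ℝ), 0 < c ρ)
    (hp : ∀ ρ > (0:ℝ), HasDerivAt p ((c ρ) ^ 2) ρ)
    (hHd : ∀ ρ > (0:ℝ), HasDerivAt H (c ρ / ρ) ρ)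
    (hHinv : ∀ ρ > (0:ℝ), Hinv (H ρ) = ρ)
    (hHinv' : ∀ ρ > (0:ℝ), HasDerivAt Hinv (ρ / c ρ) (H ρ))
    (w1m w2m w1p w2p ρm ρp : ℝ)
    (hρp : 0 < ρp) (hρ : ρp < ρm)
    (hm : H ρm = (w2m - w1m) / 2) (hpp : H ρp = (w2p - w1p) / 2)
    (F : ℝ) (hF : F = (1 / ρp - 1 / ρm) * (p ρm - p ρp)) :
    (HasDerivAt
      (fun y => (w1m + y) / 2 - (w1p + w2p) / 2 -
        Real.sqrt ((1 / Hinv ((w2p - w1p) / 2) - 1 / Hinv ((y - w1m) / 2)) *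
          (p (Hinv ((y - w1m) / 2)) - p (Hinv ((w2p - w1p) / 2)))))
      (-(1 / (4 * Real.sqrt F)) *
        (Real.sqrt (ρm * c ρm * (1 / ρp - 1 / ρm)) -
          Real.sqrt ((p ρm - p ρp) / (ρm * c ρm))) ^ 2) w2m ∧
      -(1 / (4 * Real.sqrt F)) *
        (Real.sqrt (ρm * c ρm * (1 / ρp - 1 / ρm)) -
          Real.sqrt ((p ρm - p ρp) / (ρm * c ρm))) ^ 2 ≤ 0) ∧
    (HasDerivAt
      (fun x => (w1m + w2m) / 2 - (x + w2p) / 2 -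
        Real.sqrt ((1 / Hinv ((w2p - x) / 2) - 1 / Hinv ((w2m - w1m) / 2)) *
          (p (Hinv ((w2m - w1m) / 2)) - p (Hinv ((w2p - x) / 2)))))
      (-(1 / (4 * Real.sqrt F)) *
        (Real.sqrt (ρp * c ρp * (1 / ρp - 1 / ρm)) +
          Real.sqrt ((p ρm - p ρp) / (ρp * c ρp))) ^ 2) w1p ∧
      -(1 / (4 * Real.sqrt F)) *
        (Real.sqrt (ρp * c ρp * (1 / ρp - 1 / ρm)) +
          Real.sqrt ((p ρm - p ρp) / (ρp * c ρp))) ^ 2 ≤ 0) ∧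
    (HasDerivAt
      (fun y => (w1m + w2m) / 2 - (w1p + y) / 2 -
        Real.sqrt ((1 / Hinv ((y - w1p) / 2) - 1 / Hinv ((w2m - w1m) / 2)) *
          (p (Hinv ((w2m - w1m) / 2)) - p (Hinv ((y - w1p) / 2)))))
      (1 / (4 * Real.sqrt F) *
        (Real.sqrt (ρp * c ρp * (1 / ρp - 1 / ρm)) -
          Real.sqrt ((p ρm - p ρp) / (ρp * c ρp))) ^ 2) w2p ∧
      0 ≤ 1 / (4 * Real.sqrt F) *
        (Real.sqrt (ρp * c ρp * (1 / ρp - 1 / ρm)) -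
          Real.sqrt ((p ρm - p ρp) / (ρp * c ρp))) ^ 2) := by
  have ρm0 : 0 < ρm := hρp.trans hρ
  have hcm := hcpos ρm ρm0
  have hcp := hcpos ρp hρp
  have hvm : Hinv ((w2m - w1m) / 2) = ρm := by rw [← hm]; exact hHinv ρm ρm0
  have hvp : Hinv ((w2p - w1p) / 2) = ρp := by rw [← hpp]; exact hHinv ρp hρp
  -- p is strictly increasing
  have hpm : p ρp < p ρm := by
    have hmono : StrictMonoOn p (Set.Icc ρp ρm) := by
      apply strictMonoOn_of_deriv_pos (convex_Icc _ _)
      · intro x hx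
        exact ((hp x (hρp.trans_le hx.1)).continuousAt).continuousWithinAt
      · intro x hx
        rw [interior_Icc] at hx
        have hx0 : 0 < x := hρp.trans hx.1
        rw [(hp x hx0).deriv]
        exact pow_pos (hcpos x hx0) 2
    exact hmono (Set.left_mem_Icc.2 hρ.le) (Set.right_mem_Icc.2 hρ.le) hρ
  have hiv : (0:ℝ) < ρp⁻¹ - ρm⁻¹ := by
    have := one_div_lt_one_div_of_lt hρp hρ
    rw [one_div, one_div] at this
    linarith
  have hF0 : 0 < F := by
    rw [hF, one_div, one_div]
    exact mul_pos hiv (by linarith)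
  have hsF : 0 < Real.sqrt F := Real.sqrt_pos.2 hF0
  have hFeq : (ρp⁻¹ - ρm⁻¹) * (p ρm - p ρp) = F := by rw [hF]; ring
  have hFeq' : (ρp⁻¹ - ρm⁻¹) * (p ρm - p ρp) ≠ 0 := by rw [hFeq]; exact hF0.ne'
  have hHm : HasDerivAt Hinv (ρm / c ρm) ((w2m - w1m) / 2) := hm ▸ hHinv' ρm ρm0
  have hHp : HasDerivAt Hinv (ρp / c ρp) ((w2p - w1p) / 2) := hpp ▸ hHinv' ρp hρp
  have hpdm : HasDerivAt p (c ρm ^ 2) (Hinv ((w2m - w1m) / 2)) := by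
    rw [hvm]; exact hp ρm ρm0
  have hpdp : HasDerivAt p (c ρp ^ 2) (Hinv ((w2p - w1p) / 2)) := by
    rw [hvp]; exact hp ρp hρp
  have hA0m : 0 ≤ ρm * c ρm * (ρp⁻¹ - ρm⁻¹) :=
    mul_nonneg (mul_nonneg ρm0.le hcm.le) hiv.le
  have hB0m : 0 ≤ (p ρm - p ρp) / (ρm * c ρm) :=
    div_nonneg (by linarith) (mul_nonneg ρm0.le hcm.le)
  have hA0p : 0 ≤ ρp * c ρp * (ρp⁻¹ - ρm⁻¹) :=
    mul_nonneg (mul_nonneg hρp.le hcp.le) hiv.le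
  have hB0p : 0 ≤ (p ρm - p ρp) / (ρp * c ρp) :=
    div_nonneg (by linarith) (mul_nonneg hρp.le hcp.le)
  have habm : Real.sqrt (ρm * c ρm * (ρp⁻¹ - ρm⁻¹)) * Real.sqrt ((p ρm - p ρp) / (ρm * c ρm))
      = Real.sqrt F := by
    rw [← Real.sqrt_mul hA0m, ← hFeq]
    congr 1
    field_simp
  have habp : Real.sqrt (ρp * c ρp * (ρp⁻¹ - ρm⁻¹)) * Real.sqrt ((p ρm - p ρp) / (ρp * c ρp))
      = Real.sqrt F := by
    rw [← Real.sqrt_mul hA0p, ← hFeq]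
    congr 1
    field_simp
  simp only [one_div, ← hpp, ← hm, hHinv ρm ρm0, hHinv ρp hρp]
  refine ⟨⟨?_, ?_⟩, ⟨?_, ?_⟩, ⟨?_, ?_⟩⟩
  · -- part 1 derivative
    have hg : HasDerivAt (fun y : ℝ => (y - w1m) / 2) (1 / 2) w2m := by
      simpa using ((hasDerivAt_id w2m).sub_const w1m).div_const 2
    have hB : HasDerivAt (fun y => Hinv ((y - w1m) / 2)) (ρm / c ρm * (1 / 2)) w2m :=
      hHm.comp w2m hg
    have hBne : Hinv ((w2m - w1m) / 2) ≠ 0 := by rw [hvm]; exact ρm0.ne'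
    have hinv := hB.inv hBne
    have hsub := hinv.const_sub (ρp⁻¹)
    have hP : HasDerivAt (fun y => p (Hinv ((y - w1m) / 2)))
        (c ρm ^ 2 * (ρm / c ρm * (1 / 2))) w2m := hpdm.comp w2m hB
    have hPs := hP.sub_const (p ρp)
    have hprod := hsub.mul hPs
    have hne : (ρp⁻¹ - (Hinv ((w2m - w1m) / 2))⁻¹) *
        (p (Hinv ((w2m - w1m) / 2)) - p ρp) ≠ 0 := by rw [hvm]; exact hFeq'
    have hS := hprod.sqrt hne
    have hlin : HasDerivAt (fun y : ℝ => (w1m + y) / 2 - (w1p + w2p) / 2) (1 / 2) w2m := by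
      simpa using (((hasDerivAt_id w2m).const_add w1m).div_const 2).sub_const ((w1p + w2p) / 2)
    have htot := hlin.sub hS
    convert htot using 1
    · rfl
    · rfl
    · rfl
    simp only [hvm, Pi.inv_apply, Pi.mul_apply]
    rw [hFeq]
    rw [sub_sq, Real.sq_sqrt hA0m, Real.sq_sqrt hB0m, mul_assoc 2, habm]
    field_simp
    ring
  · simp only [neg_mul, neg_nonpos]
    positivity
  · -- part 2 derivative
    have hg : HasDerivAt (fun x : ℝ => (w2p - x) / 2) (-1 / 2) w1p :=
      ((hasDerivAt_id w1p).const_sub w2p).div_const 2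
    have hB : HasDerivAt (fun x => Hinv ((w2p - x) / 2)) (ρp / c ρp * (-1 / 2)) w1p :=
      hHp.comp w1p hg
    have hBne : Hinv ((w2p - w1p) / 2) ≠ 0 := by rw [hvp]; exact hρp.ne'
    have hsub := (hB.inv hBne).sub_const (ρm⁻¹)
    have hP : HasDerivAt (fun x => p (Hinv ((w2p - x) / 2)))
        (c ρp ^ 2 * (ρp / c ρp * (-1 / 2))) w1p := hpdp.comp w1p hB
    have hPs := hP.const_sub (p ρm)
    have hprod := hsub.mul hPs
    have hne : ((Hinv ((w2p - w1p) / 2))⁻¹ - ρm⁻¹) *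
        (p ρm - p (Hinv ((w2p - w1p) / 2))) ≠ 0 := by
      rw [hvp]; exact hFeq'
    have hS := hprod.sqrt hne
    have hlin : HasDerivAt (fun x : ℝ => (w1m + w2m) / 2 - (x + w2p) / 2) (-(1 / 2)) w1p := by
      simpa using (((hasDerivAt_id w1p).add_const w2p).div_const 2).const_sub ((w1m + w2m) / 2)
    have htot := hlin.sub hS
    convert htot using 1
    · rfl
    · rfl
    · rfl
    simp only [hvp, Pi.inv_apply, Pi.mul_apply]
    rw [hFeq]
    rw [add_sq, Real.sq_sqrt hA0p, Real.sq_sqrt hB0p, mul_assoc 2, habp]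
    field_simp
    ring
  · simp only [neg_mul, neg_nonpos]
    positivity
  · -- part 3 derivative
    have hg : HasDerivAt (fun y : ℝ => (y - w1p) / 2) (1 / 2) w2p := by
      simpa using ((hasDerivAt_id w2p).sub_const w1p).div_const 2
    have hB : HasDerivAt (fun y => Hinv ((y - w1p) / 2)) (ρp / c ρp * (1 / 2)) w2p :=
      hHp.comp w2p hg
    have hBne : Hinv ((w2p - w1p) / 2) ≠ 0 := by rw [hvp]; exact hρp.ne'
    have hsub := (hB.inv hBne).sub_const (ρm⁻¹)
    have hP : HasDerivAt (fun y => p (Hinv ((y - w1p) / 2)))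
        (c ρp ^ 2 * (ρp / c ρp * (1 / 2))) w2p := hpdp.comp w2p hB
    have hPs := hP.const_sub (p ρm)
    have hprod := hsub.mul hPs
    have hne : ((Hinv ((w2p - w1p) / 2))⁻¹ - ρm⁻¹) *
        (p ρm - p (Hinv ((w2p - w1p) / 2))) ≠ 0 := by
      rw [hvp]; exact hFeq'
    have hS := hprod.sqrt hne
    have hlin : HasDerivAt (fun y : ℝ => (w1m + w2m) / 2 - (w1p + y) / 2) (-(1 / 2)) w2p := by
      simpa using (((hasDerivAt_id w2p).const_add w1p).div_const 2).const_sub ((w1m + w2m) / 2)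
    have htot := hlin.sub hS
    convert htot using 1
    · rfl
    · rfl
    · rfl
    simp only [hvp, Pi.inv_apply, Pi.mul_apply]
    rw [hFeq]
    rw [sub_sq, Real.sq_sqrt hA0p, Real.sq_sqrt hB0p, mul_assoc 2, habp]
    field_simp
    ring
  · positivity
end

section
/- For a Van der Waals gas with constant heat capacity, where c(ρ) = (1/(1−bρ))·√(γ₀(γ₀−1))·(ρ/(1−bρ))^((γ₀−1)/2) for 0 < ρ < 1/b with b > 0 and γ₀ > 1, the function H(ρ) = ∫₀^ρ c(s)/s ds equals 2√(γ₀/(γ₀−1))·(ρ/(1−bρ))^((γ₀−1)/2), and consequently c(ρ) = ((γ₀−1)/2)·(1 + b̃ H(ρ)^(ν−1))·H(ρ), where ν = (γ₀+1)/(γ₀−1) and b̃ = b·((γ₀−1)/(4γ₀))^(1/(γ₀−1)). -/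
open Set

/-- For a Van der Waals gas with constant heat capacity,
`c(ρ) = (1/(1−bρ))·√(γ₀(γ₀−1))·(ρ/(1−bρ))^((γ₀−1)/2)` on `0 < ρ < 1/b`, the Riemann
invariant `H(ρ) = ∫₀^ρ c(s)/s ds` equals `2√(γ₀/(γ₀−1))·(ρ/(1−bρ))^((γ₀−1)/2)`, and
consequently `c = ((γ₀−1)/2)(1 + b̃ H^(ν−1)) H` with `ν = (γ₀+1)/(γ₀−1)` and
`b̃ = b ((γ₀−1)/(4γ₀))^(1/(γ₀−1))`. -/
theorem van_der_waals_H (γ b ν btil : ℝ) (hγ : 1 < γ) (hb : 0 < b)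
    (hν : ν = (γ + 1) / (γ - 1))
    (hbt : btil = b * ((γ - 1) / (4 * γ)) ^ (1 / (γ - 1)))
    (c H : ℝ → ℝ)
    (hc : ∀ ρ ∈ Ioo (0:ℝ) (1 / b),
      c ρ = 1 / (1 - b * ρ) * Real.sqrt (γ * (γ - 1)) * (ρ / (1 - b * ρ)) ^ ((γ - 1) / 2))
    (hH : ∀ ρ ∈ Ioo (0:ℝ) (1 / b), H ρ = ∫ s in Ioc (0:ℝ) ρ, c s / s) :
    (∀ ρ ∈ Ioo (0:ℝ) (1 / b),
      H ρ = 2 * Real.sqrt (γ / (γ - 1)) * (ρ / (1 - b * ρ)) ^ ((γ - 1) / 2)) ∧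
    (∀ ρ ∈ Ioo (0:ℝ) (1 / b),
      c ρ = (γ - 1) / 2 * (1 + btil * H ρ ^ (ν - 1)) * H ρ) := by
  have h1 : (0:ℝ) < γ - 1 := by linarith
  have hγ0 : (0:ℝ) < γ := by linarith
  set α : ℝ := (γ - 1) / 2 with hα_def
  have hα : 0 < α := by positivity
  have hsqrt : Real.sqrt (γ * (γ - 1)) = (γ - 1) * Real.sqrt (γ / (γ - 1)) := by
    rw [show γ * (γ - 1) = (γ - 1) ^ 2 * (γ / (γ - 1)) by field_simp,
      Real.sqrt_mul (sq_nonneg _), Real.sqrt_sq h1.le]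
  have key : ∀ ρ ∈ Ioo (0:ℝ) (1 / b),
      H ρ = 2 * Real.sqrt (γ / (γ - 1)) * (ρ / (1 - b * ρ)) ^ α := by
    intro ρ hρ
    obtain ⟨hρ0, hρb⟩ := hρ
    have hbρ : b * ρ < 1 := by
      rw [lt_div_iff₀ hb] at hρb; linarith
    have h1ρ : 0 < 1 - b * ρ := by linarith
    set g : ℝ → ℝ := fun s => s ^ (α - 1) *
      (Real.sqrt (γ * (γ - 1)) * ((1 - b * s) ^ (α - 1) * (1 - b * s) ^ 2)⁻¹) with hg_def
    set F : ℝ → ℝ := fun s => 2 * Real.sqrt (γ / (γ - 1)) * (s / (1 - b * s)) ^ α with hF_def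
    have hden : ∀ s ∈ Icc (0:ℝ) ρ, 0 < 1 - b * s := by
      intro s hs
      have : b * s ≤ b * ρ := mul_le_mul_of_nonneg_left hs.2 hb.le
      linarith
    have hFcont : ContinuousOn F (Icc 0 ρ) := by
      apply ContinuousOn.mul continuousOn_const
      apply ContinuousOn.rpow_const
      · exact continuousOn_id.div (by fun_prop) (fun s hs => (hden s hs).ne')
      · intro s hs; exact Or.inr hα.le
    have hderiv : ∀ s ∈ Ioo (0:ℝ) ρ, HasDerivWithinAt F (g s) (Ioi s) s := by
      intro s hs
      have hs0 : 0 < s := hs.1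
      have hsd : 0 < 1 - b * s := hden s ⟨hs0.le, hs.2.le⟩
      have hu0 : 0 < s / (1 - b * s) := div_pos hs0 hsd
      have hlin : HasDerivAt (fun s : ℝ => 1 - b * s) (-b) s := by
        simpa using ((hasDerivAt_id s).const_mul b).const_sub 1
      have hu : HasDerivAt (fun s : ℝ => s / (1 - b * s))
          ((1 * (1 - b * s) - s * (-b)) / (1 - b * s) ^ 2) s :=
        (hasDerivAt_id s).div hlin hsd.ne'
      have hF : HasDerivAt F
          (2 * Real.sqrt (γ / (γ - 1)) *
            ((1 * (1 - b * s) - s * (-b)) / (1 - b * s) ^ 2 * α * (s / (1 - b * s)) ^ (α - 1))) s :=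
        (hu.rpow_const (Or.inl hu0.ne')).const_mul _
      have hval : 2 * Real.sqrt (γ / (γ - 1)) *
            ((1 * (1 - b * s) - s * (-b)) / (1 - b * s) ^ 2 * α * (s / (1 - b * s)) ^ (α - 1))
          = g s := by
        rw [hg_def]
        simp only
        rw [Real.div_rpow hs0.le hsd.le, hsqrt]
        have hs1 : (0:ℝ) < s ^ (α - 1) := Real.rpow_pos_of_pos hs0 _
        have hs2 : (0:ℝ) < (1 - b * s) ^ (α - 1) := Real.rpow_pos_of_pos hsd _
        field_simp
        ring
      exact (hval ▸ hF).hasDerivWithinAt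
    have hint : IntervalIntegrable g MeasureTheory.volume 0 ρ := by
      apply (intervalIntegral.intervalIntegrable_rpow' (by linarith : (-1:ℝ) < α - 1)).mul_continuousOn
      rw [uIcc_of_le hρ0.le]
      apply ContinuousOn.mul continuousOn_const
      apply ContinuousOn.inv₀
      · apply ContinuousOn.mul
        · apply ContinuousOn.rpow_const (by fun_prop)
          intro s hs; exact Or.inl (hden s hs).ne'
        · fun_prop
      · intro s hs
        exact (mul_pos (Real.rpow_pos_of_pos (hden s hs) _) (pow_pos (hden s hs) 2)).ne'
    have hftc := intervalIntegral.integral_eq_sub_of_hasDeriv_right_of_le hρ0.le hFcont hderiv hint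
    have hF0 : F 0 = 0 := by
      rw [hF_def]; simp [Real.zero_rpow hα.ne']
    rw [hH ρ ⟨hρ0, hρb⟩]
    have hcongr : ∫ s in Ioc (0:ℝ) ρ, c s / s = ∫ s in Ioc (0:ℝ) ρ, g s := by
      apply MeasureTheory.setIntegral_congr_fun measurableSet_Ioc
      intro s hs
      have hs0 : 0 < s := hs.1
      have hsb : s < 1 / b := lt_of_le_of_lt hs.2 hρb
      have hsd : 0 < 1 - b * s := hden s ⟨hs0.le, hs.2⟩
      simp only
      rw [hc s ⟨hs0, hsb⟩, hg_def]
      simp only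
      rw [Real.div_rpow hs0.le hsd.le,
        show α - 1 = α - (1:ℝ) from rfl, Real.rpow_sub hs0, Real.rpow_sub hsd,
        Real.rpow_one, Real.rpow_one]
      have hs1 : (0:ℝ) < s ^ α := Real.rpow_pos_of_pos hs0 _
      have hs2 : (0:ℝ) < (1 - b * s) ^ α := Real.rpow_pos_of_pos hsd _
      field_simp
    rw [hcongr, ← intervalIntegral.integral_of_le hρ0.le, hftc, hF0, sub_zero, hF_def]
  constructor
  · exact key
  · intro ρ hρ
    obtain ⟨hρ0, hρb⟩ := hρ
    have hbρ : b * ρ < 1 := by rw [lt_div_iff₀ hb] at hρb; linarith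
    have h1ρ : 0 < 1 - b * ρ := by linarith
    set y : ℝ := ρ / (1 - b * ρ) with hy_def
    have hy : 0 < y := div_pos hρ0 h1ρ
    have hK : (0:ℝ) < 2 * Real.sqrt (γ / (γ - 1)) := by
      have : 0 < γ / (γ - 1) := by positivity
      positivity
    have hν1 : ν - 1 = 2 * (1 / (γ - 1)) := by rw [hν]; field_simp; ring
    have hpow : btil * (2 * Real.sqrt (γ / (γ - 1)) * y ^ α) ^ (ν - 1) = b * y := by
      rw [hν1, hbt,
        Real.mul_rpow hK.le (Real.rpow_pos_of_pos hy _).le,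
        ← Real.rpow_mul hy.le, show α * (2 * (1 / (γ - 1))) = 1 by rw [hα_def]; field_simp,
        Real.rpow_one, Real.rpow_mul hK.le,
        show ((2:ℝ)) = ((2:ℕ):ℝ) by norm_num, Real.rpow_natCast,
        mul_pow, Real.sq_sqrt (by positivity : (0:ℝ) ≤ γ / (γ - 1))]
      have hone : ((γ - 1) / (4 * γ)) ^ (1 / (γ - 1)) *
          ((2:ℝ) ^ 2 * (γ / (γ - 1))) ^ (1 / (γ - 1)) = 1 := by
        rw [← Real.mul_rpow (by positivity) (by positivity),
          show (γ - 1) / (4 * γ) * ((2:ℝ) ^ 2 * (γ / (γ - 1))) = 1 by field_simp; ring,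
          Real.one_rpow]
      linear_combination b * y * hone
    rw [hc ρ ⟨hρ0, hρb⟩, key ρ ⟨hρ0, hρb⟩, hpow, hsqrt]
    have h1y : 1 + b * y = 1 / (1 - b * ρ) := by rw [hy_def]; field_simp; ring
    rw [h1y]; ring
end

section
/- For a Van der Waals gas as above, the characteristic speeds λ₁ = u − c and λ₂ = u + c, expressed in the Riemann invariants w₁ = u − H, w₂ = u + H with u = (w₁+w₂)/2 and H = (w₂−w₁)/2, satisfy ∂λ₁/∂w₁ = ∂λ₂/∂w₂ = (ν/(2(ν−1)))·(1 + b̃ H^(ν−1)) > 0 and ∂λ₁/∂w₂ = ∂λ₂/∂w₁ = (1/(2(ν−1)))·((ν−2) − b̃ ν H^(ν−1)), where ν = (γ₀+1)/(γ₀−1). -/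
/-- Partial derivatives of the characteristic speeds `λ₁ = u − c`, `λ₂ = u + c` of a
Van der Waals gas in the Riemann invariants `w₁, w₂` (with `u = (w₁+w₂)/2`,
`H = (w₂−w₁)/2`, `c(H) = (1/(ν−1))(1 + b̃ H^(ν−1)) H`):
`∂λ₁/∂w₁ = ∂λ₂/∂w₂ = (ν/(2(ν−1)))(1 + b̃ H^(ν−1)) > 0` and
`∂λ₁/∂w₂ = ∂λ₂/∂w₁ = (1/(2(ν−1)))((ν−2) − b̃ ν H^(ν−1))`. -/
theorem vdw_characteristic_derivatives (γ ν btil : ℝ) (hγ : 1 < γ)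
    (hν : ν = (γ + 1) / (γ - 1)) (hb : 0 ≤ btil)
    (cH : ℝ → ℝ)
    (hcH : ∀ x > (0:ℝ), cH x = 1 / (ν - 1) * (1 + btil * x ^ (ν - 1)) * x)
    (w1 w2 Hv : ℝ) (hHv : Hv = (w2 - w1) / 2) (hHpos : 0 < Hv) :
    HasDerivAt (fun x => (x + w2) / 2 - cH ((w2 - x) / 2))
      (ν / (2 * (ν - 1)) * (1 + btil * Hv ^ (ν - 1))) w1 ∧
    HasDerivAt (fun y => (w1 + y) / 2 + cH ((y - w1) / 2))
      (ν / (2 * (ν - 1)) * (1 + btil * Hv ^ (ν - 1))) w2 ∧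
    0 < ν / (2 * (ν - 1)) * (1 + btil * Hv ^ (ν - 1)) ∧
    HasDerivAt (fun y => (w1 + y) / 2 - cH ((y - w1) / 2))
      (1 / (2 * (ν - 1)) * ((ν - 2) - btil * ν * Hv ^ (ν - 1))) w2 ∧
    HasDerivAt (fun x => (x + w2) / 2 + cH ((w2 - x) / 2))
      (1 / (2 * (ν - 1)) * ((ν - 2) - btil * ν * Hv ^ (ν - 1))) w1 := by
  have hγ1 : (0:ℝ) < γ - 1 := by linarith
  have hν1 : 1 < ν := by
    rw [hν, lt_div_iff₀ hγ1]; linarith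
  have hν1' : ν - 1 ≠ 0 := by linarith
  set g : ℝ → ℝ := fun x => 1 / (ν - 1) * (1 + btil * x ^ (ν - 1)) * x with hg
  -- derivative of g at Hv
  have hrp : HasDerivAt (fun x : ℝ => x ^ (ν - 1)) ((ν - 1) * Hv ^ (ν - 1 - 1)) Hv :=
    Real.hasDerivAt_rpow_const (Or.inl (ne_of_gt hHpos))
  have hgd : HasDerivAt g (1 / (ν - 1) * (1 + btil * ν * Hv ^ (ν - 1))) Hv := by
    have h1 : HasDerivAt (fun x : ℝ => 1 / (ν - 1) * (1 + btil * x ^ (ν - 1)))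
        (1 / (ν - 1) * (btil * ((ν - 1) * Hv ^ (ν - 1 - 1)))) Hv :=
      (((hrp.const_mul btil).const_add 1).const_mul (1 / (ν - 1)))
    have h2 := h1.fun_mul (hasDerivAt_id Hv)
    have hpow : Hv ^ (ν - 1 - 1) * Hv = Hv ^ (ν - 1) := by
      rw [← Real.rpow_add_one (ne_of_gt hHpos)]
      ring_nf
    refine h2.congr_deriv (Eq.symm ?_)
    simp only [id_eq, mul_one]
    field_simp
    linear_combination (-btil) * (ν - 1) * hpow
  -- inner affine maps
  have hin1 : HasDerivAt (fun x : ℝ => (w2 - x) / 2) (-(1 : ℝ) / 2) w1 := by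
    have := ((hasDerivAt_id w1).const_sub w2).div_const 2
    simpa using this
  have hin2 : HasDerivAt (fun y : ℝ => (y - w1) / 2) ((1 : ℝ) / 2) w2 := by
    have := ((hasDerivAt_id w2).sub_const w1).div_const 2
    simpa using this
  have hval1 : (w2 - w1) / 2 = Hv := hHv.symm
  -- compositions with g
  have hc1 : HasDerivAt (fun x : ℝ => g ((w2 - x) / 2))
      (1 / (ν - 1) * (1 + btil * ν * Hv ^ (ν - 1)) * (-(1 : ℝ) / 2)) w1 := by
    have hgd' : HasDerivAt g (1 / (ν - 1) * (1 + btil * ν * Hv ^ (ν - 1)))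
        ((fun x : ℝ => (w2 - x) / 2) w1) := by simpa [hval1] using hgd
    exact hgd'.comp w1 hin1
  have hc2 : HasDerivAt (fun y : ℝ => g ((y - w1) / 2))
      (1 / (ν - 1) * (1 + btil * ν * Hv ^ (ν - 1)) * ((1 : ℝ) / 2)) w2 := by
    have hin2' : HasDerivAt (fun y : ℝ => (y - w1) / 2) ((1 : ℝ) / 2) w2 := hin2
    have hv : (w2 - w1) / 2 = Hv := hHv.symm
    have hgd' : HasDerivAt g (1 / (ν - 1) * (1 + btil * ν * Hv ^ (ν - 1)))
        ((fun y : ℝ => (y - w1) / 2) w2) := by simpa [hv] using hgd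
    exact hgd'.comp w2 hin2'
  -- eventual equality of cH-compositions with g-compositions
  have hev1 : (fun x : ℝ => cH ((w2 - x) / 2)) =ᶠ[nhds w1] (fun x : ℝ => g ((w2 - x) / 2)) := by
    have hcont : Filter.Tendsto (fun x : ℝ => (w2 - x) / 2) (nhds w1) (nhds Hv) := by
      rw [← hval1]; exact hin1.continuousAt
    filter_upwards [hcont.eventually (eventually_gt_nhds hHpos)] with x hx
    exact hcH _ hx
  have hev2 : (fun y : ℝ => cH ((y - w1) / 2)) =ᶠ[nhds w2] (fun y : ℝ => g ((y - w1) / 2)) := by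
    have hcont : Filter.Tendsto (fun y : ℝ => (y - w1) / 2) (nhds w2) (nhds Hv) := by
      rw [← hval1]; exact hin2.continuousAt
    filter_upwards [hcont.eventually (eventually_gt_nhds hHpos)] with y hy
    exact hcH _ hy
  have hc1' : HasDerivAt (fun x : ℝ => cH ((w2 - x) / 2))
      (1 / (ν - 1) * (1 + btil * ν * Hv ^ (ν - 1)) * (-(1 : ℝ) / 2)) w1 :=
    hc1.congr_of_eventuallyEq hev1
  have hc2' : HasDerivAt (fun y : ℝ => cH ((y - w1) / 2))
      (1 / (ν - 1) * (1 + btil * ν * Hv ^ (ν - 1)) * ((1 : ℝ) / 2)) w2 :=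
    hc2.congr_of_eventuallyEq hev2
  -- linear parts
  have hl1 : HasDerivAt (fun x : ℝ => (x + w2) / 2) ((1 : ℝ) / 2) w1 := by
    have := ((hasDerivAt_id w1).add_const w2).div_const 2
    simpa using this
  have hl2 : HasDerivAt (fun y : ℝ => (w1 + y) / 2) ((1 : ℝ) / 2) w2 := by
    have := ((hasDerivAt_id w2).const_add w1).div_const 2
    simpa using this
  refine ⟨?_, ?_, ?_, ?_, ?_⟩
  · have := hl1.fun_sub hc1'
    refine this.congr_deriv (Eq.symm ?_)
    field_simp
    ring
  · have := hl2.fun_add hc2'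
    refine this.congr_deriv (Eq.symm ?_)
    field_simp
    ring
  · have h1 : 0 < ν / (2 * (ν - 1)) := div_pos (by linarith) (by linarith)
    have h2 : 0 < 1 + btil * Hv ^ (ν - 1) := by positivity
    exact mul_pos h1 h2
  · have := hl2.fun_sub hc2'
    refine this.congr_deriv (Eq.symm ?_)
    field_simp
    ring
  · have := hl1.fun_add hc1'
    refine this.congr_deriv (Eq.symm ?_)
    field_simp
    ring
end

section
/- Suppose a 2-shock curve r = x₂(t) satisfies dx₂/dt = U and along it w₁⁻ = g(w₂⁻, w₁⁺, w₂⁺) where ℱ(g, w₂⁻, w⁺) = 0. If w solves ∂ₜw₁ + λ₁∂ᵣw₁ = f, ∂ₜw₂ + λ₂∂ᵣw₂ = −f on both sides, then along the shock: (U − λ₁⁻)·∂ᵣw₁⁻ = (U − λ₂⁻)·∂_{w₂⁻}g·∂ᵣw₂⁻ − (∂_{w₂⁻}g + 1)·f⁻ + (U − λ₁⁺)·∂_{w₁⁺}g·∂ᵣw₁⁺ + (U − λ₂⁺)·∂_{w₂⁺}g·∂ᵣw₂⁺ + (∂_{w₁⁺}g − ∂_{w₂⁺}g)·f⁺. -/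
/-- Expression of `∂ᵣw₁⁻` along the shock: if the shock curve `r = x₂(t)` moves with
speed `U(t)`, the Riemann invariants solve the diagonal system with source `f` on each
side, and along the shock `w₁⁻ = g(w₂⁻, w₁⁺, w₂⁺)`, then the stated identity between
the one-sided `r`-derivatives holds along the shock.  Functions of `(r,w₁,w₂)` are
encoded on `ℝ×ℝ×ℝ`; `(1,0)` is the `t` direction and `(0,1)` the `r` direction. -/
theorem shock_derivative_identity
    (L1 L2 F : ℝ × ℝ × ℝ → ℝ)
    (hL1 : ContDiff ℝ 1 L1) (hL2 : ContDiff ℝ 1 L2) (hF : ContDiff ℝ 1 F)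
    (g : ℝ × ℝ × ℝ → ℝ) (hg : ContDiff ℝ 1 g)
    (Wm1 Wm2 Wp1 Wp2 : ℝ × ℝ → ℝ)
    (hWm1 : ContDiff ℝ 1 Wm1) (hWm2 : ContDiff ℝ 1 Wm2)
    (hWp1 : ContDiff ℝ 1 Wp1) (hWp2 : ContDiff ℝ 1 Wp2)
    (hpdem1 : ∀ p : ℝ × ℝ,
      fderiv ℝ Wm1 p (1, 0) + L1 (p.2, Wm1 p, Wm2 p) * fderiv ℝ Wm1 p (0, 1)
        = F (p.2, Wm1 p, Wm2 p))
    (hpdem2 : ∀ p : ℝ × ℝ,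
      fderiv ℝ Wm2 p (1, 0) + L2 (p.2, Wm1 p, Wm2 p) * fderiv ℝ Wm2 p (0, 1)
        = - F (p.2, Wm1 p, Wm2 p))
    (hpdep1 : ∀ p : ℝ × ℝ,
      fderiv ℝ Wp1 p (1, 0) + L1 (p.2, Wp1 p, Wp2 p) * fderiv ℝ Wp1 p (0, 1)
        = F (p.2, Wp1 p, Wp2 p))
    (hpdep2 : ∀ p : ℝ × ℝ,
      fderiv ℝ Wp2 p (1, 0) + L2 (p.2, Wp1 p, Wp2 p) * fderiv ℝ Wp2 p (0, 1)
        = - F (p.2, Wp1 p, Wp2 p))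
    (x2 U : ℝ → ℝ)
    (hx2 : ∀ t : ℝ, HasDerivAt x2 (U t) t)
    (hcompat : ∀ t : ℝ,
      Wm1 (t, x2 t) = g (Wm2 (t, x2 t), Wp1 (t, x2 t), Wp2 (t, x2 t))) :
    ∀ t : ℝ,
      (U t - L1 (x2 t, Wm1 (t, x2 t), Wm2 (t, x2 t))) * fderiv ℝ Wm1 (t, x2 t) (0, 1)
        = (U t - L2 (x2 t, Wm1 (t, x2 t), Wm2 (t, x2 t)))
            * fderiv ℝ g (Wm2 (t, x2 t), Wp1 (t, x2 t), Wp2 (t, x2 t)) (1, 0, 0)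
            * fderiv ℝ Wm2 (t, x2 t) (0, 1)
          - (fderiv ℝ g (Wm2 (t, x2 t), Wp1 (t, x2 t), Wp2 (t, x2 t)) (1, 0, 0) + 1)
            * F (x2 t, Wm1 (t, x2 t), Wm2 (t, x2 t))
          + (U t - L1 (x2 t, Wp1 (t, x2 t), Wp2 (t, x2 t)))
            * fderiv ℝ g (Wm2 (t, x2 t), Wp1 (t, x2 t), Wp2 (t, x2 t)) (0, 1, 0)
            * fderiv ℝ Wp1 (t, x2 t) (0, 1)
          + (U t - L2 (x2 t, Wp1 (t, x2 t), Wp2 (t, x2 t)))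
            * fderiv ℝ g (Wm2 (t, x2 t), Wp1 (t, x2 t), Wp2 (t, x2 t)) (0, 0, 1)
            * fderiv ℝ Wp2 (t, x2 t) (0, 1)
          + (fderiv ℝ g (Wm2 (t, x2 t), Wp1 (t, x2 t), Wp2 (t, x2 t)) (0, 1, 0)
              - fderiv ℝ g (Wm2 (t, x2 t), Wp1 (t, x2 t), Wp2 (t, x2 t)) (0, 0, 1))
            * F (x2 t, Wp1 (t, x2 t), Wp2 (t, x2 t)) := by
  intro t
  have hcurve : HasDerivAt (fun s : ℝ => (s, x2 s)) ((1 : ℝ), U t) t :=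
    HasDerivAt.prodMk (hasDerivAt_id t) (hx2 t)
  have key : ∀ (W : ℝ × ℝ → ℝ), ContDiff ℝ 1 W →
      HasDerivAt (fun s => W (s, x2 s)) (fderiv ℝ W (t, x2 t) (1, U t)) t := by
    intro W hW
    exact ((hW.differentiable one_ne_zero (t, x2 t)).hasFDerivAt).comp_hasDerivAt t hcurve
  have hinner : HasDerivAt
      (fun s => (Wm2 (s, x2 s), Wp1 (s, x2 s), Wp2 (s, x2 s)))
      (fderiv ℝ Wm2 (t, x2 t) (1, U t),
       fderiv ℝ Wp1 (t, x2 t) (1, U t), fderiv ℝ Wp2 (t, x2 t) (1, U t)) t :=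
    HasDerivAt.prodMk (key Wm2 hWm2) (HasDerivAt.prodMk (key Wp1 hWp1) (key Wp2 hWp2))
  have hR : HasDerivAt (fun s => g (Wm2 (s, x2 s), Wp1 (s, x2 s), Wp2 (s, x2 s)))
      (fderiv ℝ g (Wm2 (t, x2 t), Wp1 (t, x2 t), Wp2 (t, x2 t))
        (fderiv ℝ Wm2 (t, x2 t) (1, U t),
         fderiv ℝ Wp1 (t, x2 t) (1, U t), fderiv ℝ Wp2 (t, x2 t) (1, U t))) t :=
    ((hg.differentiable one_ne_zero _).hasFDerivAt).comp_hasDerivAt t hinner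
  have hfun : (fun s : ℝ => Wm1 (s, x2 s)) =
      fun s => g (Wm2 (s, x2 s), Wp1 (s, x2 s), Wp2 (s, x2 s)) := funext hcompat
  have hL : HasDerivAt (fun s => g (Wm2 (s, x2 s), Wp1 (s, x2 s), Wp2 (s, x2 s)))
      (fderiv ℝ Wm1 (t, x2 t) (1, U t)) t := hfun ▸ key Wm1 hWm1
  have hE := hL.unique hR
  have expand2 : ∀ (D : ℝ × ℝ →L[ℝ] ℝ) (u : ℝ),
      D (1, u) = D (1, 0) + u * D (0, 1) := by
    intro D u
    have h : ((1 : ℝ), u) = (1, 0) + u • ((0 : ℝ), (1 : ℝ)) := by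
      simp [Prod.ext_iff]
    rw [h, map_add, map_smul, smul_eq_mul]
  have expand3 : ∀ (D : ℝ × ℝ × ℝ →L[ℝ] ℝ) (a b c : ℝ),
      D (a, b, c) = a * D (1, 0, 0) + b * D (0, 1, 0) + c * D (0, 0, 1) := by
    intro D a b c
    have h : ((a : ℝ), b, c) = a • ((1 : ℝ), (0 : ℝ), (0 : ℝ))
        + b • ((0 : ℝ), (1 : ℝ), (0 : ℝ)) + c • ((0 : ℝ), (0 : ℝ), (1 : ℝ)) := by
      simp [Prod.ext_iff]
    rw [h, map_add, map_add, map_smul, map_smul, map_smul]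
    simp [smul_eq_mul]
  rw [expand3, expand2 (fderiv ℝ Wm1 (t, x2 t)) (U t),
    expand2 (fderiv ℝ Wm2 (t, x2 t)) (U t), expand2 (fderiv ℝ Wp1 (t, x2 t)) (U t),
    expand2 (fderiv ℝ Wp2 (t, x2 t)) (U t)] at hE
  have h1 := hpdem1 (t, x2 t)
  have h2 := hpdem2 (t, x2 t)
  have h3 := hpdep1 (t, x2 t)
  have h4 := hpdep2 (t, x2 t)
  simp only at h1 h2 h3 h4
  set g1 := fderiv ℝ g (Wm2 (t, x2 t), Wp1 (t, x2 t), Wp2 (t, x2 t)) (1, 0, 0)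
  set g2 := fderiv ℝ g (Wm2 (t, x2 t), Wp1 (t, x2 t), Wp2 (t, x2 t)) (0, 1, 0)
  set g3 := fderiv ℝ g (Wm2 (t, x2 t), Wp1 (t, x2 t), Wp2 (t, x2 t)) (0, 0, 1)
  linear_combination hE - h1 + g1 * h2 + g2 * h3 + g3 * h4
end
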